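/- arXiv:0707.1309 — 3 statements merged into one kernel-verified Lean document; each statement's English description precedes it below -/
import Mathlib

section
/- A finite connected multigraph G has an even number of spanning trees if and only if G has an Eulerian cut, i.e., a nonempty edge cut in which every vertex has even degree (equivalently, a partition of V(G) into nonempty sets X, X' such that every vertex has an even number of edges crossing the partition). -/
open scoped Classical
open Finset

/-- A finite multigraph without loops: edges are given with an (arbitrary) orientation
`ends e = (o, t)`; connectivity is expressed by saying that the only vertex sets with
no crossing edges are `∅` and `univ`. -/
structure Multigraph where
  V : Type
  E : Type
  [fintV : Fintype V]
  [decV : DecidableEq V]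
  [fintE : Fintype E]
  [decE : DecidableEq E]
  [nonemptyV : Nonempty V]
  ends : E → V × V
  loopless : ∀ e, (ends e).1 ≠ (ends e).2
  conn : ∀ S : Finset V, (∀ e, ((ends e).1 ∈ S ↔ (ends e).2 ∈ S)) → S = ∅ ∨ S = Finset.univ

attribute [instance] Multigraph.fintV Multigraph.decV Multigraph.fintE Multigraph.decE
  Multigraph.nonemptyV

/-- `x` is an endpoint of the edge `e`. -/
def Multigraph.Inc (G : Multigraph) (x : G.V) (e : G.E) : Prop :=
  (G.ends e).1 = x ∨ (G.ends e).2 = x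

/-- The endpoint of `e` other than `x`. -/
noncomputable def Multigraph.other (G : Multigraph) (x : G.V) (e : G.E) : G.V :=
  if (G.ends e).1 = x then (G.ends e).2 else (G.ends e).1

/-- The degree of a vertex. -/
noncomputable def Multigraph.deg (G : Multigraph) (x : G.V) : ℕ :=
  (Finset.univ.filter (fun e => G.Inc x e)).card

/-- The genus (cyclomatic number) `|E| - |V| + 1` of a graph. -/
noncomputable def genus (G : Multigraph) : ℤ :=
  (Fintype.card G.E : ℤ) - (Fintype.card G.V : ℤ) + 1

/-- The graph Laplacian `div(f)` of an integer-valued function on vertices. -/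
noncomputable def lap (G : Multigraph) (f : G.V → ℤ) : G.V → ℤ :=
  fun x => ∑ e ∈ Finset.univ.filter (fun e => G.Inc x e), (f x - f (G.other x e))

/-- A divisor is principal if it is the Laplacian of some function. -/
def IsPrincipal (G : Multigraph) (D : G.V → ℤ) : Prop := ∃ f, D = lap G f

/-- Linear equivalence of divisors. -/
def LinEquiv (G : Multigraph) (D D' : G.V → ℤ) : Prop := ∃ f, D - D' = lap G f

/-- `r(D) ≥ k`: every effective divisor of degree `k` can be subtracted from `D`
leaving a divisor equivalent to an effective one. -/
def RankGE (G : Multigraph) (D : G.V → ℤ) (k : ℕ) : Prop :=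
  ∀ E : G.V → ℤ, (∀ x, 0 ≤ E x) → (∑ x, E x) = (k : ℤ) →
    ∃ F : G.V → ℤ, (∀ x, 0 ≤ F x) ∧ LinEquiv G (D - E) F

/-- The Baker–Norine rank of a divisor (with `r(D) = -1` when `|D| = ∅`). -/
noncomputable def rank (G : Multigraph) (D : G.V → ℤ) : ℤ :=
  sSup {r : ℤ | r = -1 ∨ ∃ n : ℕ, r = (n : ℤ) ∧ RankGE G D n}

/-- The canonical divisor `K_G = Σ (deg x - 2)(x)`. -/
noncomputable def canonical (G : Multigraph) : G.V → ℤ := fun x => (G.deg x : ℤ) - 2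

/-- `f` is harmonic at `x` (values in an abelian group). -/
def HarmonicAt (G : Multigraph) (A : Type*) [AddCommGroup A] (f : G.V → A) (x : G.V) : Prop :=
  ∑ e ∈ Finset.univ.filter (fun e => G.Inc x e), (f x - f (G.other x e)) = 0

/-- A morphism of multigraphs: vertices go to vertices, and each edge goes either to an
edge incident to the images of its endpoints, or to the common image of its endpoints. -/
structure Morphism (G G' : Multigraph) where
  vmap : G.V → G'.V
  emap : G.E → G'.E ⊕ G'.V
  compat : ∀ e x, G.Inc x e →
    Sum.elim (fun e' => G'.Inc (vmap x) e') (fun v' => vmap x = v') (emap e)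

variable {G G' : Multigraph}

/-- The number of edges at `x` mapping to the edge `e'`. -/
noncomputable def preCount (φ : Morphism G G') (x : G.V) (e' : G'.E) : ℕ :=
  (Finset.univ.filter (fun e => G.Inc x e ∧ φ.emap e = Sum.inl e')).card

/-- Harmonicity (horizontal conformality) of a morphism. -/
def IsHarmonic (φ : Morphism G G') : Prop :=
  ∀ (x : G.V) (e₁ e₂ : G'.E), G'.Inc (φ.vmap x) e₁ → G'.Inc (φ.vmap x) e₂ →
    preCount φ x e₁ = preCount φ x e₂

/-- The horizontal multiplicity `m_φ(x)` (equal to `preCount φ x e'` for any edge `e'`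
incident to `φ(x)` when `φ` is harmonic; `0` if there is no such edge). -/
noncomputable def hmult (φ : Morphism G G') (x : G.V) : ℕ :=
  if h : ∃ e' : G'.E, G'.Inc (φ.vmap x) e' then preCount φ x h.choose else 0

/-- The vertical multiplicity `v_φ(x)`: the number of edges at `x` collapsed to a vertex. -/
noncomputable def vmult (φ : Morphism G G') (x : G.V) : ℕ :=
  (Finset.univ.filter (fun e => G.Inc x e ∧ (φ.emap e).isRight = true)).card

/-- The number of edges of `G` mapping to a given edge `e'` of `G'`. -/
noncomputable def edgeCount (φ : Morphism G G') (e' : G'.E) : ℕ :=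
  (Finset.univ.filter (fun e => φ.emap e = Sum.inl e')).card

/-- The degree of a harmonic morphism: the common number of edge preimages of any edge
of `G'` (and `0` if `G'` has no edges). -/
noncomputable def mdeg (φ : Morphism G G') : ℕ :=
  if h : Nonempty G'.E then edgeCount φ h.some else 0

/-- Push-forward of divisors. -/
noncomputable def pushDiv (φ : Morphism G G') (D : G.V → ℤ) : G'.V → ℤ :=
  fun y => ∑ x ∈ Finset.univ.filter (fun x => φ.vmap x = y), D x

/-- Pullback of divisors, weighted by horizontal multiplicities. -/
noncomputable def pullDiv (φ : Morphism G G') (D' : G'.V → ℤ) : G.V → ℤ :=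
  fun x => (hmult φ x : ℤ) * D' (φ.vmap x)

/-- A spanning tree: a set of edges of size `|V| - 1` spanning a connected subgraph. -/
def IsSpanningTree (G : Multigraph) (T : Finset G.E) : Prop :=
  (∀ S : Finset G.V, (∀ e ∈ T, ((G.ends e).1 ∈ S ↔ (G.ends e).2 ∈ S)) → S = ∅ ∨ S = Finset.univ)
  ∧ T.card + 1 = Fintype.card G.V

/-- The number of spanning trees of `G`. -/
noncomputable def numSpanningTrees (G : Multigraph) : ℕ :=
  (Finset.univ.filter (fun T => IsSpanningTree G T)).card

/-- The edge `e` crosses the vertex set `X`. -/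
def Crosses (G : Multigraph) (X : Finset G.V) (e : G.E) : Prop :=
  ¬(((G.ends e).1 ∈ X) ↔ ((G.ends e).2 ∈ X))

/-- `G` has a nonempty edge cut in which every vertex has even degree. -/
def HasEulerianCut (G : Multigraph) : Prop :=
  ∃ X : Finset G.V, X ≠ ∅ ∧ X ≠ Finset.univ ∧ (∃ e, Crosses G X e) ∧
    ∀ x : G.V, Even ((Finset.univ.filter (fun e => G.Inc x e ∧ Crosses G X e)).card)

/-- A harmonic 1-form (flow): zero net flow at every vertex. The value `ω e` is the value
on the directed edge given by the chosen orientation; the reverse edge carries `-ω e`. -/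
def IsFlow (G : Multigraph) (ω : G.E → ℝ) : Prop :=
  ∀ x : G.V,
    (∑ e, ((if (G.ends e).2 = x then ω e else 0) - (if (G.ends e).1 = x then ω e else 0))) = 0

/-- Pullback of a 1-form: `ω'(φ(e))` on horizontal edges (with a sign recording whether
orientation is preserved) and `0` on vertical edges. -/
noncomputable def pullForm (φ : Morphism G G') (ω' : G'.E → ℝ) : G.E → ℝ :=
  fun e => Sum.elim
    (fun e' => if G'.ends e' = (φ.vmap (G.ends e).1, φ.vmap (G.ends e).2) then ω' e' else -ω' e')
    (fun _ => 0) (φ.emap e)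

/-- Push-forward (trace) of a 1-form: `(φ_*ω)(e') = Σ_{φ(e)=e'} ω(e)` (as directed edges). -/
noncomputable def pushForm (φ : Morphism G G') (ω : G.E → ℝ) : G'.E → ℝ :=
  fun e' => ∑ e ∈ Finset.univ.filter (fun e => φ.emap e = Sum.inl e'),
    (if G'.ends e' = (φ.vmap (G.ends e).1, φ.vmap (G.ends e).2) then ω e else -ω e)

/-- An automorphism of a multigraph. -/
structure GraphAut (G : Multigraph) where
  vmap : G.V ≃ G.V
  emap : G.E ≃ G.E
  compat : ∀ e, G.ends (emap e) = (vmap (G.ends e).1, vmap (G.ends e).2) ∨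
                G.ends (emap e) = (vmap (G.ends e).2, vmap (G.ends e).1)

/-- The action of an automorphism on 1-forms: `(α*ω)(e) = ω(α(e))` as directed edges. -/
noncomputable def autPullForm {G : Multigraph} (α : GraphAut G) (ω : G.E → ℝ) : G.E → ℝ :=
  fun e => if G.ends (α.emap e) = (α.vmap (G.ends e).1, α.vmap (G.ends e).2)
           then ω (α.emap e) else -ω (α.emap e)

/-- `G` stays connected after deleting any one edge. -/
def TwoEdgeConnected (G : Multigraph) : Prop :=
  ∀ e₀ : G.E, ∀ S : Finset G.V,
    (∀ e, e ≠ e₀ → ((G.ends e).1 ∈ S ↔ (G.ends e).2 ∈ S)) → S = ∅ ∨ S = Finset.univ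

/-- `G` stays connected after deleting any two edges. -/
def ThreeEdgeConnected (G : Multigraph) : Prop :=
  ∀ e₁ e₂ : G.E, ∀ S : Finset G.V,
    (∀ e, e ≠ e₁ → e ≠ e₂ → ((G.ends e).1 ∈ S ↔ (G.ends e).2 ∈ S)) → S = ∅ ∨ S = Finset.univ

/-- The graph `B₂`: two vertices joined by two parallel edges. -/
noncomputable def B2 : Multigraph where
  V := Bool
  E := Bool
  ends := fun _ => (false, true)
  loopless := by decide
  conn := by decide

namespace Stmt14Aux

noncomputable section
open Equiv Matrix

lemma zmod2_cases (a : ZMod 2) : a = 0 ∨ a = 1 := by revert a; decide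

lemma zmod2_add_self (a : ZMod 2) : a + a = 0 := by revert a; decide

lemma zmod2_mul_self (a : ZMod 2) : a * a = a := by revert a; decide

lemma zmod2_add_eq_zero (a b : ZMod 2) : a + b = 0 ↔ a = b := by revert a b; decide

lemma zmod2_shift (a b c : ZMod 2) : (a + c) + (b + c) = a + b := by revert a b c; decide

lemma signcast {n : Type*} [Fintype n] [DecidableEq n] (σ : Perm n) :
    ((Perm.sign σ : ℤ) : ZMod 2) = 1 := by
  rcases Int.units_eq_one_or (Perm.sign σ) with h | h <;> rw [h] <;> decide

lemma det_eq_sum_perm {n : Type*} [Fintype n] [DecidableEq n] (A : Matrix n n (ZMod 2)) :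
    A.det = ∑ σ : Perm n, ∏ i, A i (σ i) := by
  rw [← Matrix.det_transpose, Matrix.det_apply']
  refine Finset.sum_congr rfl fun σ _ => ?_
  rw [signcast σ, one_mul]
  exact Finset.prod_congr rfl fun i _ => rfl

lemma det_eq_sum_perm' {n : Type*} [Fintype n] [DecidableEq n] (A : Matrix n n (ZMod 2)) :
    A.det = ∑ σ : Perm n, ∏ i, A (σ i) i := by
  rw [Matrix.det_apply']
  refine Finset.sum_congr rfl fun σ _ => ?_
  rw [signcast σ, one_mul]

/-- Sign-free Cauchy-Binet expansion over GF(2). -/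
lemma detGram_gen {n m : Type*} [Fintype n] [DecidableEq n] [Fintype m] [DecidableEq m]
    (A : Matrix n m (ZMod 2)) :
    (A * Aᵀ).det = ∑ f : n → m, (∏ i, A i (f i)) * (A.submatrix id f).det := by
  rw [det_eq_sum_perm]
  have step : ∀ σ : Perm n, (∏ i, (A * Aᵀ) i (σ i))
      = ∑ f : n → m, ∏ i, (A i (f i) * A (σ i) (f i)) := by
    intro σ
    simp only [Matrix.mul_apply, Matrix.transpose_apply]
    rw [Finset.prod_univ_sum (fun _ : n => (Finset.univ : Finset m))
      (fun i e => A i e * A (σ i) e), Fintype.piFinset_univ]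
  calc (∑ σ : Perm n, ∏ i, (A * Aᵀ) i (σ i))
      = ∑ σ : Perm n, ∑ f : n → m, ∏ i, (A i (f i) * A (σ i) (f i)) := by
        exact Finset.sum_congr rfl fun σ _ => step σ
    _ = ∑ f : n → m, ∑ σ : Perm n, (∏ i, A i (f i)) * ∏ i, A (σ i) (f i) := by
        rw [Finset.sum_comm]
        exact Finset.sum_congr rfl fun f _ => Finset.sum_congr rfl fun σ _ =>
          Finset.prod_mul_distrib
    _ = ∑ f : n → m, (∏ i, A i (f i)) * (A.submatrix id f).det := by
        refine Finset.sum_congr rfl fun f _ => ?_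
        rw [← Finset.mul_sum, det_eq_sum_perm']
        rfl

/-- Fibers over subsets of the wrong size contribute `0`. -/
lemma fiber_zero {n m : Type*} [Fintype n] [DecidableEq n] [Fintype m] [DecidableEq m]
    (A : Matrix n m (ZMod 2)) (T : Finset m) (hT : T.card ≠ Fintype.card n) :
    (∑ f ∈ Finset.univ.filter (fun f : n → m => Finset.univ.image f = T),
      (∏ i, A i (f i)) * (A.submatrix id f).det) = 0 := by
  refine Finset.sum_eq_zero fun f hf => ?_
  rw [Finset.mem_filter] at hf
  have hfni : ¬ Function.Injective f := by
    intro hinj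
    apply hT
    rw [← hf.2, Finset.card_image_of_injective _ hinj, Finset.card_univ]
  obtain ⟨a, b, hab, hne⟩ := Function.not_injective_iff.mp hfni
  have : (A.submatrix id f).det = 0 :=
    Matrix.det_zero_of_column_eq hne (fun k => by simp [Matrix.submatrix_apply, hab])
  rw [this, mul_zero]

/-- Fibers over size-matching subsets contribute the squared (= plain, in GF(2))
subdeterminant. -/
lemma fiber_sum {n m : Type*} [Fintype n] [DecidableEq n] [Fintype m] [DecidableEq m]
    (A : Matrix n m (ZMod 2)) (T : Finset m)
    (g0 : n → m) (hinj : Function.Injective g0) (himg : Finset.univ.image g0 = T) :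
    (∑ f ∈ Finset.univ.filter (fun f : n → m => Finset.univ.image f = T),
      (∏ i, A i (f i)) * (A.submatrix id f).det)
    = (A.submatrix id g0).det := by
  have hdet : ∀ σ : Perm n, (A.submatrix id (g0 ∘ σ)).det = (A.submatrix id g0).det := by
    intro σ
    have : A.submatrix id (g0 ∘ σ) = (A.submatrix id g0).submatrix id σ := rfl
    rw [this, Matrix.det_permute' σ, signcast σ, one_mul]
  have hre : (∑ f ∈ Finset.univ.filter (fun f : n → m => Finset.univ.image f = T),
      (∏ i, A i (f i)) * (A.submatrix id f).det)
      = ∑ σ : Perm n, (∏ i, A i (g0 (σ i))) * (A.submatrix id (g0 ∘ σ)).det := by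
    refine (Finset.sum_bij (fun (σ : Perm n) _ => g0 ∘ σ) ?_ ?_ ?_ ?_).symm
    · intro σ _
      rw [Finset.mem_filter]
      refine ⟨Finset.mem_univ _, ?_⟩
      rw [← himg]
      ext e
      simp only [Finset.mem_image, Finset.mem_univ, true_and, Function.comp_apply]
      constructor
      · rintro ⟨i, rfl⟩; exact ⟨σ i, rfl⟩
      · rintro ⟨i, rfl⟩; exact ⟨σ.symm i, by simp⟩
    · intro σ₁ _ σ₂ _ h
      ext i
      exact hinj (congrFun h i)
    · intro f hf
      rw [Finset.mem_filter] at hf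
      have hfinj : Function.Injective f := by
        have hcard : (Finset.univ.image f).card = (Finset.univ : Finset n).card := by
          rw [hf.2, ← himg]
          exact Finset.card_image_of_injective Finset.univ hinj
        have := Finset.card_image_iff.mp hcard
        intro a b hab
        exact this (Finset.mem_coe.mpr (Finset.mem_univ a))
          (Finset.mem_coe.mpr (Finset.mem_univ b)) hab
      have hmem : ∀ i, ∃ j, g0 j = f i := by
        intro i
        have : f i ∈ T := by
          rw [← hf.2]; exact Finset.mem_image_of_mem f (Finset.mem_univ i)
        rw [← himg] at this
        obtain ⟨j, _, hj⟩ := Finset.mem_image.mp this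
        exact ⟨j, hj⟩
      choose σ₀ hσ₀ using hmem
      have hσ₀inj : Function.Injective σ₀ := by
        intro a b hab
        apply hfinj
        rw [← hσ₀ a, ← hσ₀ b, hab]
      refine ⟨Equiv.ofBijective σ₀ (Finite.injective_iff_bijective.mp hσ₀inj),
        Finset.mem_univ _, ?_⟩
      funext i
      exact hσ₀ i
    · intro σ _
      rfl
  rw [hre]
  have : (∑ σ : Perm n, (∏ i, A i (g0 (σ i))) * (A.submatrix id (g0 ∘ σ)).det)
      = (∑ σ : Perm n, ∏ i, A i (g0 (σ i))) * (A.submatrix id g0).det := by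
    rw [Finset.sum_mul]
    exact Finset.sum_congr rfl fun σ _ => by rw [hdet σ]
  rw [this]
  have : (∑ σ : Perm n, ∏ i, A i (g0 (σ i))) = (A.submatrix id g0).det := by
    rw [det_eq_sum_perm]
    rfl
  rw [this, zmod2_mul_self]

variable (G : Multigraph)

/-- Base vertex. -/
def v0 : G.V := Classical.arbitrary G.V

/-- Vertices other than the base vertex. -/
abbrev W := {x : G.V // x ≠ v0 G}

/-- Reduced incidence matrix over `GF(2)`. -/
def M : Matrix (W G) G.E (ZMod 2) := fun w e => if G.Inc w.1 e then 1 else 0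

lemma cardW : Fintype.card (W G) + 1 = Fintype.card G.V := by
  have h1 : Fintype.card {x : G.V // x = v0 G} = 1 := Fintype.card_subtype_eq _
  have h2 := Fintype.card_subtype_compl (fun x : G.V => x = v0 G)
  have h3 : 0 < Fintype.card G.V := Fintype.card_pos
  simp only [h1] at h2
  have h4 : Fintype.card (W G) = Fintype.card {x : G.V // ¬ x = v0 G} := rfl
  omega

/-- Extension of `x : W → GF(2)` to all vertices by `0` at `v0`. -/
def ext (x : W G → ZMod 2) : G.V → ZMod 2 :=
  fun v => if h : v = v0 G then 0 else x ⟨v, h⟩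

lemma sum_ind (x : W G → ZMod 2) (v : G.V) :
    (∑ w : W G, if w.1 = v then x w else 0) = ext G x v := by
  by_cases h : v = v0 G
  · subst h
    rw [ext, dif_pos rfl]
    exact Finset.sum_eq_zero fun w _ => if_neg w.2
  · rw [ext, dif_neg h]
    have : ∀ w : W G, (w.1 = v) = (w = ⟨v, h⟩) := by
      intro w
      simp [Subtype.ext_iff]
    simp only [this]
    simp


lemma M_apply_sum (x : W G → ZMod 2) (e : G.E) :
    (∑ w : W G, M G w e * x w) = ext G x (G.ends e).1 + ext G x (G.ends e).2 := by
  have key : ∀ w : W G, M G w e * x w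
      = (if w.1 = (G.ends e).1 then x w else 0)
        + (if w.1 = (G.ends e).2 then x w else 0) := by
    intro w
    show (if G.Inc w.1 e then (1 : ZMod 2) else 0) * x w = _
    by_cases h1 : w.1 = (G.ends e).1
    · have h2 : ¬ w.1 = (G.ends e).2 := fun h2 => G.loopless e (h1.symm.trans h2)
      rw [if_pos (show G.Inc w.1 e from Or.inl h1.symm), if_pos h1, if_neg h2, one_mul, add_zero]
    · by_cases h2 : w.1 = (G.ends e).2
      · rw [if_pos (show G.Inc w.1 e from Or.inr h2.symm), if_pos h2, if_neg h1, one_mul, zero_add]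
      · rw [if_neg ?_, if_neg h1, if_neg h2, zero_mul, add_zero]
        rintro (h | h)
        exacts [h1 h.symm, h2 h.symm]
  simp only [key]
  rw [Finset.sum_add_distrib, sum_ind, sum_ind]

/-- The support of `ext x`. -/
def XS (x : W G → ZMod 2) : Finset G.V := Finset.univ.filter (fun v => ext G x v = 1)

lemma mem_XS (x : W G → ZMod 2) (v : G.V) : v ∈ XS G x ↔ ext G x v = 1 := by
  simp [XS]

lemma ext_chi (x : W G → ZMod 2) (v : G.V) :
    ext G x v = if v ∈ XS G x then 1 else 0 := by
  rcases zmod2_cases (ext G x v) with h | h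
  · rw [h, if_neg]
    rw [mem_XS, h]
    decide
  · rw [h, if_pos]
    rw [mem_XS]
    exact h

lemma ext_eq_iff (x : W G → ZMod 2) (u v : G.V) :
    ext G x u = ext G x v ↔ (u ∈ XS G x ↔ v ∈ XS G x) := by
  rw [mem_XS, mem_XS]
  rcases zmod2_cases (ext G x u) with h | h <;> rcases zmod2_cases (ext G x v) with h' | h' <;>
    rw [h, h'] <;> decide

/-- The GF(2) vector associated to a vertex subset, shifted to vanish at `v0`. -/
def xOf (X : Finset G.V) : W G → ZMod 2 :=
  fun w => (if w.1 ∈ X then 1 else 0) + (if v0 G ∈ X then 1 else 0)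

lemma ext_xOf (X : Finset G.V) (v : G.V) :
    ext G (xOf G X) v = (if v ∈ X then 1 else 0) + (if v0 G ∈ X then 1 else 0) := by
  rw [ext]
  by_cases h : v = v0 G
  · rw [dif_pos h, h]
    exact (zmod2_add_self _).symm
  · rw [dif_neg h]
    rfl

lemma chi_pair (X : Finset G.V) (u v : G.V) :
    ((if u ∈ X then (1 : ZMod 2) else 0) + (if v ∈ X then 1 else 0) = 0) ↔ (u ∈ X ↔ v ∈ X) := by
  by_cases hu : u ∈ X <;> by_cases hv : v ∈ X <;> simp [hu, hv] <;> decide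

lemma cross_val (X : Finset G.V) (e : G.E) :
    ((if (G.ends e).1 ∈ X then (1 : ZMod 2) else 0) + (if (G.ends e).2 ∈ X then 1 else 0))
      = if Crosses G X e then 1 else 0 := by
  by_cases h1 : (G.ends e).1 ∈ X <;> by_cases h2 : (G.ends e).2 ∈ X <;>
    (simp [Crosses, h1, h2]; try decide)

lemma mulVecT (x : W G → ZMod 2) (e : G.E) :
    ((M G)ᵀ.mulVec x) e = ext G x (G.ends e).1 + ext G x (G.ends e).2 := by
  rw [← M_apply_sum]
  rfl

lemma mulVecM (ω : G.E → ZMod 2) (w : W G) :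
    ((M G).mulVec ω) w = ∑ e : G.E, (if G.Inc w.1 e then ω e else 0) := by
  refine Finset.sum_congr rfl fun e _ => ?_
  show (if G.Inc w.1 e then (1 : ZMod 2) else 0) * ω e = _
  by_cases h : G.Inc w.1 e <;> simp [h]

lemma even_iff_cast (k : ℕ) : Even k ↔ (k : ZMod 2) = 0 := by
  rw [ZMod.natCast_eq_zero_iff]
  exact even_iff_two_dvd

lemma card_cross_cast (X : Finset G.V) (v : G.V) :
    (((Finset.univ.filter (fun e => G.Inc v e ∧ Crosses G X e)).card : ZMod 2))
      = ∑ e : G.E, (if G.Inc v e then (if Crosses G X e then (1 : ZMod 2) else 0) else 0) := by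
  rw [Finset.card_filter, Nat.cast_sum]
  refine Finset.sum_congr rfl fun e _ => ?_
  by_cases h1 : G.Inc v e <;> by_cases h2 : Crosses G X e <;> simp [h1, h2]

lemma handshake (ω : G.E → ZMod 2) :
    (∑ v : G.V, ∑ e : G.E, if G.Inc v e then ω e else 0) = 0 := by
  rw [Finset.sum_comm]
  refine Finset.sum_eq_zero fun e _ => ?_
  have hpair : Finset.univ.filter (fun v => G.Inc v e) = {(G.ends e).1, (G.ends e).2} := by
    ext v
    simp [Multigraph.Inc, Finset.mem_insert, eq_comm]
  calc (∑ v : G.V, if G.Inc v e then ω e else 0)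
      = ∑ _v ∈ Finset.univ.filter (fun v => G.Inc v e), ω e := (Finset.sum_filter _ _).symm
    _ = 0 := by
        rw [hpair, Finset.sum_const, Finset.card_pair (G.loopless e), two_smul]
        exact zmod2_add_self _

lemma gram_iff_cut : (M G * (M G)ᵀ).det = 0 ↔ HasEulerianCut G := by
  rw [← Matrix.exists_mulVec_eq_zero_iff]
  constructor
  · rintro ⟨x, hx0, hker⟩
    have hker' : (M G).mulVec ((M G)ᵀ.mulVec x) = 0 := by
      rw [Matrix.mulVec_mulVec]; exact hker
    set ω := (M G)ᵀ.mulVec x with hωdef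
    set X := XS G x with hXdef
    have hω : ∀ e, ω e = if Crosses G X e then 1 else 0 := by
      intro e
      rw [hωdef, mulVecT, ext_chi, ext_chi, ← hXdef, cross_val]
    have hv0 : v0 G ∉ X := by
      rw [hXdef, mem_XS, ext, dif_pos rfl]
      decide
    have hzero : ∀ w : W G, (∑ e : G.E, if G.Inc w.1 e then ω e else 0) = 0 := by
      intro w
      rw [← mulVecM]
      exact congrFun hker' w
    have hmemX : ∃ v, v ∈ X := by
      obtain ⟨w, hw⟩ := Function.ne_iff.mp hx0
      refine ⟨w.1, ?_⟩
      rw [hXdef, mem_XS, ext, dif_neg w.2]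
      rcases zmod2_cases (x w) with h | h
      · exact absurd h hw
      · exact h
    refine ⟨X, ?_, ?_, ?_, ?_⟩
    · obtain ⟨v, hv⟩ := hmemX
      exact Finset.ne_empty_of_mem hv
    · intro h
      exact hv0 (h ▸ Finset.mem_univ _)
    · by_contra hno
      push_neg at hno
      have : ∀ e, ((G.ends e).1 ∈ X ↔ (G.ends e).2 ∈ X) := by
        intro e
        have := hno e
        rw [Crosses, not_not] at this
        exact this
      rcases G.conn X this with h | h
      · obtain ⟨v, hv⟩ := hmemX
        rw [h] at hv
        exact absurd hv (Finset.notMem_empty v)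
      · exact hv0 (h ▸ Finset.mem_univ _)
    · intro v
      rw [even_iff_cast, card_cross_cast]
      have hterm : ∀ e : G.E,
          (if G.Inc v e then (if Crosses G X e then (1 : ZMod 2) else 0) else 0)
            = (if G.Inc v e then ω e else 0) := by
        intro e
        rw [hω e]
      rw [Finset.sum_congr rfl fun e _ => hterm e]
      by_cases h : v = v0 G
      · subst h
        have htot := handshake G ω
        rw [Finset.sum_eq_single (v0 G) (fun b _ hb => hzero ⟨b, hb⟩)
          (fun hm => absurd (Finset.mem_univ _) hm)] at htot
        exact htot
      · exact hzero ⟨v, h⟩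
  · rintro ⟨X, hne, hnuniv, ⟨e₀, hcr⟩, heven⟩
    set x := xOf G X with hxdef
    have hω : ∀ e, ((M G)ᵀ.mulVec x) e = if Crosses G X e then 1 else 0 := by
      intro e
      rw [mulVecT, hxdef, ext_xOf, ext_xOf, zmod2_shift, cross_val]
    have hx0 : x ≠ 0 := by
      have hwit : ∃ w : W G, x w = 1 := by
        by_cases hv0 : v0 G ∈ X
        · have : ∃ v, v ∉ X := by
            by_contra hall
            push_neg at hall
            exact hnuniv (Finset.eq_univ_iff_forall.mpr hall)
          obtain ⟨v, hv⟩ := this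
          refine ⟨⟨v, fun h => hv (h ▸ hv0)⟩, ?_⟩
          rw [hxdef]
          show (if v ∈ X then (1 : ZMod 2) else 0) + (if v0 G ∈ X then 1 else 0) = 1
          rw [if_neg hv, if_pos hv0, zero_add]
        · obtain ⟨v, hv⟩ := Finset.nonempty_iff_ne_empty.mpr hne
          refine ⟨⟨v, fun h => hv0 (h ▸ hv)⟩, ?_⟩
          rw [hxdef]
          show (if v ∈ X then (1 : ZMod 2) else 0) + (if v0 G ∈ X then 1 else 0) = 1
          rw [if_pos hv, if_neg hv0, add_zero]
      obtain ⟨w, hw⟩ := hwit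
      intro h0
      rw [h0] at hw
      exact absurd hw.symm one_ne_zero
    refine ⟨x, hx0, ?_⟩
    rw [← Matrix.mulVec_mulVec]
    funext w
    show ((M G).mulVec ((M G)ᵀ.mulVec x)) w = 0
    rw [mulVecM]
    have hterm : ∀ e : G.E,
        (if G.Inc w.1 e then ((M G)ᵀ.mulVec x) e else 0)
          = (if G.Inc w.1 e then (if Crosses G X e then (1 : ZMod 2) else 0) else 0) := by
      intro e
      rw [hω e]
    rw [Finset.sum_congr rfl fun e _ => hterm e, ← card_cross_cast]
    rw [← even_iff_cast]
    exact heven w.1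

lemma tree_iff_det (T : Finset G.E) (hT : T.card = Fintype.card (W G))
    (g0 : W G → G.E) (hinj : Function.Injective g0) (himg : Finset.univ.image g0 = T) :
    IsSpanningTree G T ↔ ((M G).submatrix id g0).det ≠ 0 := by
  have hker : ∀ (x : W G → ZMod 2) (w' : W G),
      (((M G).submatrix id g0)ᵀ.mulVec x) w'
        = ext G x (G.ends (g0 w')).1 + ext G x (G.ends (g0 w')).2 := by
    intro x w'
    rw [← M_apply_sum]
    rfl
  rw [← Matrix.det_transpose ((M G).submatrix id g0)]
  rw [Ne, ← Matrix.exists_mulVec_eq_zero_iff, not_exists]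
  constructor
  · rintro ⟨hconn, _⟩ x
    rintro ⟨hx0, hk⟩
    apply hx0
    have hiff : ∀ e ∈ T, ((G.ends e).1 ∈ XS G x ↔ (G.ends e).2 ∈ XS G x) := by
      intro e he
      rw [← himg] at he
      obtain ⟨w', _, rfl⟩ := Finset.mem_image.mp he
      have h0 := congrFun hk w'
      rw [hker] at h0
      rw [← ext_eq_iff]
      exact (zmod2_add_eq_zero _ _).mp h0
    rcases hconn (XS G x) hiff with h | h
    · funext w
      show x w = 0
      rcases zmod2_cases (x w) with h1 | h1
      · exact h1
      · exfalso
        have : w.1 ∈ XS G x := by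
          rw [mem_XS, ext, dif_neg w.2]
          exact h1
        rw [h] at this
        exact absurd this (Finset.notMem_empty _)
    · exfalso
      have : v0 G ∈ XS G x := h ▸ Finset.mem_univ _
      rw [mem_XS, ext, dif_pos rfl] at this
      exact absurd this (by decide)
  · intro hnot
    constructor
    · intro S hS
      set x := xOf G S with hxdef
      have hxz : x = 0 := by
        by_contra hx
        refine hnot x ⟨hx, ?_⟩
        funext w'
        show (((M G).submatrix id g0)ᵀ.mulVec x) w' = 0
        rw [hker, hxdef, ext_xOf, ext_xOf, zmod2_shift, chi_pair]
        exact hS (g0 w') (himg ▸ Finset.mem_image_of_mem g0 (Finset.mem_univ w'))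
      have hconst : ∀ w : W G, (w.1 ∈ S ↔ v0 G ∈ S) := by
        intro w
        have := congrFun hxz w
        rw [hxdef] at this
        exact (chi_pair G S w.1 (v0 G)).mp this
      by_cases hv0 : v0 G ∈ S
      · right
        rw [Finset.eq_univ_iff_forall]
        intro v
        by_cases h : v = v0 G
        · exact h ▸ hv0
        · exact (hconst ⟨v, h⟩).mpr hv0
      · left
        rw [Finset.eq_empty_iff_forall_notMem]
        intro v hv
        by_cases h : v = v0 G
        · exact hv0 (h ▸ hv)
        · exact hv0 ((hconst ⟨v, h⟩).mp hv)
    · have := cardW G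
      omega

lemma exists_g0 (T : Finset G.E) (hT : T.card = Fintype.card (W G)) :
    ∃ g0 : W G → G.E, Function.Injective g0 ∧ Finset.univ.image g0 = T := by
  have hc : Fintype.card (W G) = Fintype.card ↥T := by rw [Fintype.card_coe, hT]
  have eT := Fintype.equivOfCardEq hc
  refine ⟨fun w => (eT w).1, ?_, ?_⟩
  · intro a b h
    exact eT.injective (Subtype.ext h)
  · ext e
    simp only [Finset.mem_image, Finset.mem_univ, true_and]
    constructor
    · rintro ⟨w, rfl⟩
      exact (eT w).2
    · intro he
      exact ⟨eT.symm ⟨e, he⟩, by simp⟩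

lemma fiberT (T : Finset G.E) :
    (∑ f ∈ Finset.univ.filter (fun f : W G → G.E => Finset.univ.image f = T),
      (∏ w, M G w (f w)) * ((M G).submatrix id f).det)
    = (if IsSpanningTree G T then 1 else 0) := by
  by_cases hT : T.card = Fintype.card (W G)
  · obtain ⟨g0, hinj, himg⟩ := exists_g0 G T hT
    rw [fiber_sum (M G) T g0 hinj himg]
    rcases zmod2_cases (((M G).submatrix id g0).det) with h | h
    · rw [h, if_neg]
      intro ht
      exact ((tree_iff_det G T hT g0 hinj himg).mp ht) h
    · rw [h, if_pos]
      exact (tree_iff_det G T hT g0 hinj himg).mpr (h ▸ one_ne_zero)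
  · rw [fiber_zero (M G) T hT, if_neg]
    rintro ⟨_, hcard⟩
    have := cardW G
    omega

end
end Stmt14Aux

/-- `κ_G` is even iff `G` has an Eulerian cut. -/
theorem stmt14 (G : Multigraph) :
    Even (numSpanningTrees G) ↔ HasEulerianCut G := by
  rw [Stmt14Aux.even_iff_cast, ← Stmt14Aux.gram_iff_cut G]
  have hκ : ((numSpanningTrees G : ℕ) : ZMod 2)
      = ∑ T : Finset G.E, (if IsSpanningTree G T then (1 : ZMod 2) else 0) := by
    rw [numSpanningTrees, Finset.card_filter, Nat.cast_sum]
    exact Finset.sum_congr rfl fun T _ => by by_cases h : IsSpanningTree G T <;> simp [h]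
  have hdet : (Stmt14Aux.M G * (Stmt14Aux.M G).transpose).det
      = ∑ T : Finset G.E, (if IsSpanningTree G T then (1 : ZMod 2) else 0) := by
    rw [Stmt14Aux.detGram_gen (Stmt14Aux.M G),
      ← Finset.sum_fiberwise Finset.univ (fun f : Stmt14Aux.W G → G.E => Finset.univ.image f)
        (fun f => (∏ w, Stmt14Aux.M G w (f w)) * ((Stmt14Aux.M G).submatrix id f).det)]
    exact Finset.sum_congr rfl fun T _ => Stmt14Aux.fiberT G T
  rw [hκ, hdet]
end

section
/- If G is a 2-edge-connected finite connected multigraph of genus at least 2, then the natural homomorphism from Aut(G) to the group of linear automorphisms of the flow space H¹(G, ℝ) is injective. -/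
open scoped Classical
open Finset

variable {G G' : Multigraph}

namespace Aux17

open RealInnerProductSpace

variable {G : Multigraph}

noncomputable def dvert (G : Multigraph) (x : G.V) : EuclideanSpace ℝ G.E :=
  WithLp.toLp 2 (fun e => (if (G.ends e).2 = x then (1:ℝ) else 0) - (if (G.ends e).1 = x then 1 else 0))

noncomputable def cutSpace (G : Multigraph) : Submodule ℝ (EuclideanSpace ℝ G.E) :=
  Submodule.span ℝ (Set.range (dvert G))

lemma inner_dvert (x : G.V) (ω : EuclideanSpace ℝ G.E) :
    (inner ℝ (dvert G x) ω : ℝ) = ∑ e, ((if (G.ends e).2 = x then ω e else 0)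
      - (if (G.ends e).1 = x then ω e else 0)) := by
  rw [PiLp.inner_apply]
  refine Finset.sum_congr rfl fun e _ => ?_
  simp only [RCLike.inner_apply, conj_trivial, dvert, PiLp.toLp_apply]
  split_ifs <;> ring

lemma isFlow_iff (ω : EuclideanSpace ℝ G.E) :
    IsFlow G ω ↔ ω ∈ (cutSpace G)ᗮ := by
  constructor
  · intro h
    rw [Submodule.mem_orthogonal]
    intro u hu
    induction hu using Submodule.span_induction with
    | mem u hu => obtain ⟨x, rfl⟩ := hu; rw [inner_dvert]; exact h x
    | zero => simp
    | add u v _ _ hu hv => rw [inner_add_left, hu, hv]; ring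
    | smul c u _ hu => rw [inner_smul_left, hu]; ring
  · intro h x
    rw [← inner_dvert]
    exact (Submodule.mem_orthogonal (cutSpace G) ω).1 h _
      (Submodule.subset_span ⟨x, rfl⟩)

lemma exists_potential (u : EuclideanSpace ℝ G.E)
    (h : ∀ ω : G.E → ℝ, IsFlow G ω → ∑ e, u e * ω e = 0) :
    ∃ c : G.V → ℝ, ∀ e, u e = c (G.ends e).2 - c (G.ends e).1 := by
  have hu : u ∈ cutSpace G := by
    rw [← Submodule.orthogonal_orthogonal (cutSpace G), Submodule.mem_orthogonal]
    intro v hv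
    have hfv : IsFlow G v := (isFlow_iff v).2 hv
    have h2 := h v hfv
    rw [PiLp.inner_apply]
    simp only [RCLike.inner_apply, conj_trivial]
    rw [← h2]
  rw [cutSpace, Submodule.mem_span_range_iff_exists_fun] at hu
  obtain ⟨c, hc⟩ := hu
  refine ⟨c, fun e => ?_⟩
  have he := congrArg (fun v => v e) hc
  have hsum : (∑ x, c x • dvert G x) e = ∑ x, c x * dvert G x e := by
    simp [WithLp.ofLp_sum, PiLp.smul_apply]
  rw [hsum] at he
  rw [← he]
  have : ∀ x, c x * dvert G x e
      = (if (G.ends e).2 = x then c x else 0) - (if (G.ends e).1 = x then c x else 0) := by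
    intro x; simp only [dvert, PiLp.toLp_apply]; split_ifs <;> ring
  rw [Finset.sum_congr rfl fun x _ => this x, Finset.sum_sub_distrib,
    Finset.sum_ite_eq, Finset.sum_ite_eq]
  simp

lemma exists_cut (h2ec : TwoEdgeConnected G) {p q : G.E} (hpq : p ≠ q) (t : ℝ)
    (hser : ∀ ω : G.E → ℝ, IsFlow G ω → ω p = t * ω q) :
    ∃ S : Finset G.V,
      (∀ e, e ≠ p → e ≠ q → ((G.ends e).1 ∈ S ↔ (G.ends e).2 ∈ S)) ∧
      Crosses G S p ∧ Crosses G S q := by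
  set u : EuclideanSpace ℝ G.E :=
    WithLp.toLp 2 (fun e => (if e = p then (1:ℝ) else 0) - t * (if e = q then 1 else 0)) with hu
  have hperp : ∀ ω : G.E → ℝ, IsFlow G ω → ∑ e, u e * ω e = 0 := by
    intro ω hω
    have hval : ∑ e, u e * ω e = ω p - t * ω q := by
      simp only [hu, PiLp.toLp_apply, sub_mul, Finset.sum_sub_distrib, ite_mul, one_mul, zero_mul]
      rw [Finset.sum_ite_eq' Finset.univ p ω]
      have : ∀ e, (t * if e = q then (1:ℝ) else 0) * ω e
          = t * (if e = q then ω e else 0) := by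
        intro e; split_ifs <;> ring
      rw [Finset.sum_congr rfl fun e _ => this e, ← Finset.mul_sum,
        Finset.sum_ite_eq' Finset.univ q ω]
      simp
    rw [hval, hser ω hω]; ring
  obtain ⟨c, hc⟩ := exists_potential u hperp
  have hup : u p = 1 := by simp [hu, hpq]
  have huq : u q = -t := by simp [hu, hpq.symm]
  have hue : ∀ e, e ≠ p → e ≠ q → u e = 0 := by
    intro e h1 h2; simp [hu, h1, h2]
  refine ⟨Finset.univ.filter (fun x => c x = c (G.ends p).2), ?_, ?_, ?_⟩
  · intro e h1 h2
    have h0 : c (G.ends e).2 - c (G.ends e).1 = 0 := by rw [← hc e]; exact hue e h1 h2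
    simp only [Finset.mem_filter, Finset.mem_univ, true_and]
    constructor <;> intro hx <;> linarith
  · have h1 : c (G.ends p).2 - c (G.ends p).1 = 1 := by rw [← hc p]; exact hup
    simp only [Crosses, Finset.mem_filter, Finset.mem_univ, true_and]
    intro hiff
    have : c (G.ends p).1 = c (G.ends p).2 ↔ True := by
      simpa using hiff.2
    simp at this; linarith
  · by_contra hnc
    have hq : ((G.ends q).1 ∈ Finset.univ.filter (fun x => c x = c (G.ends p).2)
        ↔ (G.ends q).2 ∈ Finset.univ.filter (fun x => c x = c (G.ends p).2)) := by
      by_contra h; exact hnc h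
    have h1 : c (G.ends p).2 - c (G.ends p).1 = 1 := by rw [← hc p]; exact hup
    rcases h2ec p (Finset.univ.filter (fun x => c x = c (G.ends p).2))
      (fun e he => by
        rcases eq_or_ne e q with rfl | hq2
        · exact hq
        · have h0 : c (G.ends e).2 - c (G.ends e).1 = 0 := by
            rw [← hc e]; exact hue e he hq2
          simp only [Finset.mem_filter, Finset.mem_univ, true_and]
          constructor <;> intro hx <;> linarith) with hS | hS
    · have : (G.ends p).2 ∈ Finset.univ.filter (fun x => c x = c (G.ends p).2) := by simp
      rw [hS] at this; simp at this
    · have : (G.ends p).1 ∈ Finset.univ.filter (fun x => c x = c (G.ends p).2) := by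
        rw [hS]; simp
      simp only [Finset.mem_filter, Finset.mem_univ, true_and] at this
      linarith

lemma exists_flow_ne (h2ec : TwoEdgeConnected G) (p : G.E) :
    ∃ ω : G.E → ℝ, IsFlow G ω ∧ ω p ≠ 0 := by
  by_contra h
  push_neg at h
  set u : EuclideanSpace ℝ G.E := WithLp.toLp 2 (fun e => (if e = p then (1:ℝ) else 0)) with hu
  have hperp : ∀ ω : G.E → ℝ, IsFlow G ω → ∑ e, u e * ω e = 0 := by
    intro ω hω
    have : ∑ e, u e * ω e = ω p := by
      simp only [hu, PiLp.toLp_apply, ite_mul, one_mul, zero_mul]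
      rw [Finset.sum_ite_eq' Finset.univ p ω]; simp
    rw [this]; exact h ω hω
  obtain ⟨c, hc⟩ := exists_potential u hperp
  have h1 : c (G.ends p).2 - c (G.ends p).1 = 1 := by
    rw [← hc p]; simp [hu]
  rcases h2ec p (Finset.univ.filter (fun x => c x = c (G.ends p).2))
    (fun e he => by
      have h0 : c (G.ends e).2 - c (G.ends e).1 = 0 := by
        rw [← hc e]; simp [hu, he]
      simp only [Finset.mem_filter, Finset.mem_univ, true_and]
      constructor <;> intro hx <;> linarith) with hS | hS
  · have : (G.ends p).2 ∈ Finset.univ.filter (fun x => c x = c (G.ends p).2) := by simp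
    rw [hS] at this; simp at this
  · have : (G.ends p).1 ∈ Finset.univ.filter (fun x => c x = c (G.ends p).2) := by
      rw [hS]; simp
    simp only [Finset.mem_filter, Finset.mem_univ, true_and] at this
    linarith

lemma exists_flow_vanishing (hg : 2 ≤ genus G) (p : G.E) :
    ∃ ω : G.E → ℝ, IsFlow G ω ∧ ω p = 0 ∧ ∃ e', ω e' ≠ 0 := by
  classical
  obtain ⟨x₀⟩ := G.nonemptyV
  have hsum0 : ∑ x, dvert G x = 0 := by
    ext e
    have h1 : (∑ x, dvert G x) e = ∑ x, dvert G x e := by simp [WithLp.ofLp_sum]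
    rw [h1]
    simp only [dvert, PiLp.toLp_apply, Finset.sum_sub_distrib, Finset.sum_ite_eq, Finset.mem_univ, if_true]
    show (1:ℝ) - 1 = (0:ℝ)
    norm_num
  have hspan : cutSpace G = Submodule.span ℝ
      (((Finset.univ.erase x₀).image (dvert G)) : Set (EuclideanSpace ℝ G.E)) := by
    apply le_antisymm
    · rw [cutSpace, Submodule.span_le]
      rintro v ⟨x, rfl⟩
      rcases eq_or_ne x x₀ with rfl | hx
      · have h2 : ∑ y ∈ Finset.univ.erase x, dvert G y + dvert G x = 0 := by
          rw [Finset.sum_erase_add _ _ (Finset.mem_univ x)]; exact hsum0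
        rw [eq_neg_of_add_eq_zero_right h2]
        exact Submodule.neg_mem _ (Submodule.sum_mem _ (fun y hy =>
          Submodule.subset_span (Finset.mem_coe.2 (Finset.mem_image_of_mem _ hy))))
      · exact Submodule.subset_span
          (Finset.mem_coe.2 (Finset.mem_image_of_mem _ (Finset.mem_erase.2 ⟨hx, Finset.mem_univ x⟩)))
    · rw [Submodule.span_le]
      intro v hv
      simp only [Finset.coe_image, Set.mem_image] at hv
      obtain ⟨x, _, rfl⟩ := hv
      exact Submodule.subset_span ⟨x, rfl⟩
  have hrankW : Module.finrank ℝ (cutSpace G) ≤ Fintype.card G.V - 1 := by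
    rw [hspan]
    calc Module.finrank ℝ (Submodule.span ℝ
          (((Finset.univ.erase x₀).image (dvert G)) : Set (EuclideanSpace ℝ G.E)))
        ≤ ((Finset.univ.erase x₀).image (dvert G)).card := finrank_span_finset_le_card _
      _ ≤ (Finset.univ.erase x₀).card := Finset.card_image_le
      _ = Fintype.card G.V - 1 := by
          rw [Finset.card_erase_of_mem (Finset.mem_univ x₀), Finset.card_univ]
  have htotal : Module.finrank ℝ (cutSpace G)
      + Module.finrank ℝ (cutSpace G)ᗮ = Fintype.card G.E := by
    rw [Submodule.finrank_add_finrank_orthogonal, finrank_euclideanSpace]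
  have hVpos : 1 ≤ Fintype.card G.V := Fintype.card_pos
  have hperp2 : 2 ≤ Module.finrank ℝ (cutSpace G)ᗮ := by
    rw [genus] at hg
    omega
  set ψ : (cutSpace G)ᗮ →ₗ[ℝ] ℝ :=
    { toFun := fun v => (v : EuclideanSpace ℝ G.E) p
      map_add' := fun u v => rfl
      map_smul' := fun c v => rfl } with hψ
  have hrange : Module.finrank ℝ (LinearMap.range ψ) ≤ 1 := by
    calc Module.finrank ℝ (LinearMap.range ψ) ≤ Module.finrank ℝ ℝ := Submodule.finrank_le _
      _ = 1 := Module.finrank_self ℝ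
  have hrk := LinearMap.finrank_range_add_finrank_ker ψ
  have hker : 0 < Module.finrank ℝ (LinearMap.ker ψ) := by omega
  obtain ⟨v, hv⟩ := Module.finrank_pos_iff_exists_ne_zero.1 hker
  refine ⟨((v : (cutSpace G)ᗮ) : EuclideanSpace ℝ G.E), ?_, ?_, ?_⟩
  · exact (isFlow_iff _).2 (v : (cutSpace G)ᗮ).2
  · exact v.2
  · by_contra hz
    push_neg at hz
    apply hv
    have h0 : ((v : (cutSpace G)ᗮ) : EuclideanSpace ℝ G.E) = 0 := PiLp.ext hz
    exact Subtype.ext (Subtype.ext h0)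

noncomputable def asgn (γ : GraphAut G) (e : G.E) : ℝ :=
  if G.ends (γ.emap e) = (γ.vmap (G.ends e).1, γ.vmap (G.ends e).2) then 1 else -1

lemma autPullForm_eq (γ : GraphAut G) (ω : G.E → ℝ) (e : G.E) :
    autPullForm γ ω e = asgn γ e * ω (γ.emap e) := by
  rw [autPullForm, asgn]; split_ifs <;> ring

lemma asgn_cases (γ : GraphAut G) (e : G.E) :
    (asgn γ e = 1 ∧ G.ends (γ.emap e) = (γ.vmap (G.ends e).1, γ.vmap (G.ends e).2)) ∨
    (asgn γ e = -1 ∧ G.ends (γ.emap e) = (γ.vmap (G.ends e).2, γ.vmap (G.ends e).1)) := by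
  rw [asgn]; split_ifs with h
  · exact Or.inl ⟨rfl, h⟩
  · rcases γ.compat e with h' | h'
    · exact absurd h' h
    · exact Or.inr ⟨rfl, h'⟩

lemma asgn_val (γ : GraphAut G) (e : G.E) : asgn γ e = 1 ∨ asgn γ e = -1 := by
  rw [asgn]; split_ifs <;> simp

lemma asgn_ne (γ : GraphAut G) (e : G.E) : asgn γ e ≠ 0 := by
  rcases asgn_val γ e with h | h <;> rw [h] <;> norm_num

lemma asgn_mul_self (γ : GraphAut G) (e : G.E) : asgn γ e * asgn γ e = 1 := by
  rcases asgn_val γ e with h | h <;> rw [h] <;> norm_num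

lemma exists_inc (hg : 2 ≤ genus G) (x : G.V) : ∃ e, G.Inc x e := by
  by_contra h
  push_neg at h
  rcases G.conn {x} (fun e => by
    have h1 : (G.ends e).1 ≠ x := fun hx => h e (Or.inl hx)
    have h2 : (G.ends e).2 ≠ x := fun hx => h e (Or.inr hx)
    simp [h1, h2]) with h1 | h1
  · exact absurd h1 (Finset.singleton_ne_empty x)
  · have hcard : Fintype.card G.V = 1 := by
      rw [← Finset.card_univ, ← h1, Finset.card_singleton]
    have hE : Fintype.card G.E = 0 := by
      by_contra hE
      obtain ⟨e⟩ := Fintype.card_pos_iff.1 (Nat.pos_of_ne_zero hE)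
      exact G.loopless e (Subsingleton.elim (α := G.V)
        (h := Fintype.card_le_one_iff_subsingleton.1 (le_of_eq hcard)) _ _)
    rw [genus, hcard, hE] at hg
    norm_num at hg

lemma cut_conservation (S : Finset G.V) (ω : G.E → ℝ) (hω : IsFlow G ω) :
    ∑ e, ω e * ((if (G.ends e).2 ∈ S then (1:ℝ) else 0)
      - (if (G.ends e).1 ∈ S then 1 else 0)) = 0 := by
  have h2 : ∑ x ∈ S, ∑ e, ((if (G.ends e).2 = x then ω e else 0)
      - (if (G.ends e).1 = x then ω e else 0)) = 0 :=
    Finset.sum_eq_zero (fun x _ => hω x)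
  rw [Finset.sum_comm] at h2
  have h3 : ∑ e, ω e * ((if (G.ends e).2 ∈ S then (1:ℝ) else 0)
      - (if (G.ends e).1 ∈ S then 1 else 0))
      = ∑ e, ∑ x ∈ S, ((if (G.ends e).2 = x then ω e else 0)
      - (if (G.ends e).1 = x then ω e else 0)) := by
    refine Finset.sum_congr rfl fun e _ => ?_
    rw [Finset.sum_sub_distrib, Finset.sum_ite_eq, Finset.sum_ite_eq]
    split_ifs <;> ring
  rw [h3, h2]

lemma prop_case_q (K1 K2 T1 T2 Tb U1 U2 Ub : Prop)
    (h1 : ¬(K1 ↔ K2)) (h2 : ¬(T1 ↔ T2)) (h3 : ¬(U1 ↔ U2))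
    (hk1 : K1 → (T1 ↔ Tb)) (hk2 : K2 → (T2 ↔ Tb))
    (hk3 : K1 → (U1 ↔ Ub)) (hk4 : K2 → (U2 ↔ Ub)) :
    ((¬(T1 ↔ Tb) ∧ (U1 ↔ Ub)) ↔ (¬(T2 ↔ Tb) ∧ (U2 ↔ Ub))) := by
  by_cases k1 : K1
  · constructor
    · rintro ⟨ht, -⟩; exact absurd (hk1 k1) ht
    · rintro ⟨-, hu2⟩; exact absurd ((hk3 k1).trans hu2.symm) h3
  by_cases k2 : K2
  · constructor
    · rintro ⟨-, hu1⟩; exact absurd (hu1.trans (hk4 k2).symm) h3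
    · rintro ⟨ht2, -⟩; exact absurd (hk2 k2) ht2
  · exact absurd (iff_of_false k1 k2) h1

lemma prop_case_r (K1 K2 T1 T2 Tb U1 U2 Ub : Prop)
    (h1 : ¬(K1 ↔ K2)) (h2 : (T1 ↔ T2)) (h3 : ¬(U1 ↔ U2))
    (hk1 : K1 → (T1 ↔ Tb)) (hk2 : K2 → (T2 ↔ Tb))
    (hk3 : K1 → (U1 ↔ Ub)) (hk4 : K2 → (U2 ↔ Ub)) :
    ((¬(T1 ↔ Tb) ∧ (U1 ↔ Ub)) ↔ (¬(T2 ↔ Tb) ∧ (U2 ↔ Ub))) := by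
  by_cases k1 : K1
  · constructor
    · rintro ⟨ht, -⟩; exact absurd (hk1 k1) ht
    · rintro ⟨ht2, -⟩; exact absurd (h2.symm.trans (hk1 k1)) ht2
  by_cases k2 : K2
  · constructor
    · rintro ⟨ht, -⟩; exact absurd (h2.trans (hk2 k2)) ht
    · rintro ⟨ht2, -⟩; exact absurd (hk2 k2) ht2
  · exact absurd (iff_of_false k1 k2) h1

lemma prop_case_gen (T1 T2 Tb U1 U2 Ub : Prop)
    (h2 : (T1 ↔ T2)) (h3 : (U1 ↔ U2)) :
    ((¬(T1 ↔ Tb) ∧ (U1 ↔ Ub)) ↔ (¬(T2 ↔ Tb) ∧ (U2 ↔ Ub))) := by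
  constructor
  · rintro ⟨ht, hu⟩; exact ⟨fun h => ht (h2.trans h), h3.symm.trans hu⟩
  · rintro ⟨ht, hu⟩; exact ⟨fun h => ht (h2.symm.trans h), h3.trans hu⟩

lemma prop_case_p (K1 K2 T1 T2 Tb U1 U2 Ub : Prop)
    (h1 : ¬(K1 ↔ K2)) (h2 : ¬(T1 ↔ T2)) (h3 : (U1 ↔ U2))
    (hk1 : K1 → (T1 ↔ Tb)) (hk2 : K2 → (T2 ↔ Tb))
    (hk3 : K1 → (U1 ↔ Ub)) (hk4 : K2 → (U2 ↔ Ub)) :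
    ¬((¬(T1 ↔ Tb) ∧ (U1 ↔ Ub)) ↔ (¬(T2 ↔ Tb) ∧ (U2 ↔ Ub))) := by
  intro hLR
  by_cases k1 : K1
  · have hR : ¬(T2 ↔ Tb) ∧ (U2 ↔ Ub) :=
      ⟨fun ht2 => h2 ((hk1 k1).trans ht2.symm), h3.symm.trans (hk3 k1)⟩
    exact (hLR.2 hR).1 (hk1 k1)
  by_cases k2 : K2
  · have hL : ¬(T1 ↔ Tb) ∧ (U1 ↔ Ub) :=
      ⟨fun ht1 => h2 (ht1.trans (hk2 k2).symm), h3.trans (hk4 k2)⟩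
    exact (hLR.1 hL).1 (hk2 k2)
  · exact h1 (iff_of_false k1 k2)


set_option maxHeartbeats 2000000 in
lemma aut_trivial (h2ec : TwoEdgeConnected G) (hg : 2 ≤ genus G) (γ : GraphAut G)
    (H : ∀ ω : G.E → ℝ, IsFlow G ω → autPullForm γ ω = ω) :
    (∀ e, γ.emap e = e) ∧ (∀ x, γ.vmap x = x) := by
  have H' : ∀ ω : G.E → ℝ, IsFlow G ω → ∀ e, ω e = asgn γ e * ω (γ.emap e) := by
    intro ω hω e
    rw [← autPullForm_eq, H ω hω]
  have hfix : ∀ e, γ.emap e = e := by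
    by_contra hH
    push_neg at hH
    obtain ⟨e₀, he₀⟩ := hH
    set O : Finset G.E := Finset.univ.filter (fun q => ∃ i : ℕ, (⇑γ.emap)^[i] e₀ = q) with hOdef
    have hO₀ : e₀ ∈ O := Finset.mem_filter.2 ⟨Finset.mem_univ _, 0, rfl⟩
    have hOσ : ∀ q, q ∈ O → γ.emap q ∈ O := by
      intro q hq
      obtain ⟨-, i, hi⟩ := Finset.mem_filter.1 hq
      exact Finset.mem_filter.2 ⟨Finset.mem_univ _, i + 1, by
        rw [Function.iterate_succ_apply', hi]⟩
    have hOim : O.image γ.emap = O := by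
      apply Finset.eq_of_subset_of_card_le
      · intro q hq
        obtain ⟨r, hr, rfl⟩ := Finset.mem_image.1 hq
        exact hOσ r hr
      · rw [Finset.card_image_of_injective _ γ.emap.injective]
    have hOpre : ∀ q, γ.emap q ∈ O → q ∈ O := by
      intro q hq
      rw [← hOim] at hq
      obtain ⟨r, hr, hrq⟩ := Finset.mem_image.1 hq
      rwa [← γ.emap.injective hrq]
    have hOnofix : ∀ q, q ∈ O → γ.emap q ≠ q := by
      intro q hq hfixq
      obtain ⟨-, i, rfl⟩ := Finset.mem_filter.1 hq
      apply he₀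
      apply γ.emap.injective.iterate i
      calc (⇑γ.emap)^[i] (γ.emap e₀) = γ.emap ((⇑γ.emap)^[i] e₀) := by
            rw [← Function.iterate_succ_apply, Function.iterate_succ_apply']
        _ = (⇑γ.emap)^[i] e₀ := hfixq
    have hseries : ∀ q, q ∈ O → ∃ t : ℝ, (t = 1 ∨ t = -1) ∧
        ∀ ω, IsFlow G ω → ω q = t * ω e₀ := by
      intro q hq
      obtain ⟨-, i, rfl⟩ := Finset.mem_filter.1 hq
      clear hq
      induction i with
      | zero => exact ⟨1, Or.inl rfl, fun ω _ => by simp⟩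
      | succ i ih =>
        obtain ⟨t, ht, hti⟩ := ih
        refine ⟨asgn γ ((⇑γ.emap)^[i] e₀) * t, ?_, ?_⟩
        · rcases asgn_val γ ((⇑γ.emap)^[i] e₀) with h | h <;> rcases ht with rfl | rfl <;>
            rw [h] <;> norm_num
        · intro ω hω
          have h1 := H' ω hω ((⇑γ.emap)^[i] e₀)
          have h2 := asgn_mul_self γ ((⇑γ.emap)^[i] e₀)
          have h3 := hti ω hω
          have h4 : ω (γ.emap ((⇑γ.emap)^[i] e₀))
              = asgn γ ((⇑γ.emap)^[i] e₀) * ω ((⇑γ.emap)^[i] e₀) := by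
            rw [h1, ← mul_assoc, h2, one_mul]
          rw [Function.iterate_succ_apply', h4, h3]
          ring
    obtain ⟨ω₀, hω₀f, hω₀ne⟩ := exists_flow_ne h2ec e₀
    have hω₀O : ∀ q, q ∈ O → ω₀ q ≠ 0 := by
      intro q hq
      obtain ⟨t, ht, hts⟩ := hseries q hq
      rw [hts ω₀ hω₀f]
      rcases ht with rfl | rfl <;> simpa using hω₀ne
    obtain ⟨ωs, hωsf, hωs0, est, hest⟩ := exists_flow_vanishing hg e₀
    have hωsO : ∀ q, q ∈ O → ωs q = 0 := by
      intro q hq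
      obtain ⟨t, ht, hts⟩ := hseries q hq
      rw [hts ωs hωsf, hωs0, mul_zero]
    have hestO : est ∉ O := fun h => hest (hωsO est h)
    set Reach : G.V → G.V → Prop := Relation.ReflTransGen
      (fun a b => ∃ q, q ∉ O ∧ (G.ends q = (a, b) ∨ G.ends q = (b, a))) with hReach
    have hRsymm : ∀ a b, Reach a b → Reach b a := by
      intro a b hab
      refine @Std.Symm.symm _ _ (@Relation.ReflTransGen.stdSymm _ _ ⟨?_⟩) a b hab
      rintro u v ⟨q, hq, hor⟩
      exact ⟨q, hq, hor.symm⟩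
    have hedge : ∀ q, q ∉ O → Reach (G.ends q).1 (G.ends q).2 :=
      fun q hq => Relation.ReflTransGen.single ⟨q, hq, Or.inl Prod.mk.eta.symm⟩
    set Kst : Finset G.V := Finset.univ.filter (Reach (G.ends est).1) with hKdef
    have hKmem : ∀ y, y ∈ Kst ↔ Reach (G.ends est).1 y := by
      intro y; simp [hKdef]
    have hxK : (G.ends est).1 ∈ Kst := (hKmem _).2 Relation.ReflTransGen.refl
    have hKresp : ∀ a b, Reach a b → (a ∈ Kst ↔ b ∈ Kst) := by
      intro a b hab
      rw [hKmem, hKmem]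
      exact ⟨fun h => h.trans hab, fun h => h.trans (hRsymm _ _ hab)⟩
    have hresp : ∀ (S : Finset G.V),
        (∀ q, q ∉ O → ((G.ends q).1 ∈ S ↔ (G.ends q).2 ∈ S)) →
        ∀ a b, Reach a b → (a ∈ S ↔ b ∈ S) := by
      intro S hS a b hab
      induction hab with
      | refl => exact Iff.rfl
      | tail h1 h2 ih =>
        rcases h2 with ⟨q, hq, hor⟩
        have hiff := hS q hq
        rcases hor with he | he <;> rw [he] at hiff
        · exact ih.trans hiff
        · exact ih.trans hiff.symm
    have hKcross : ∀ q, Crosses G Kst q → q ∈ O := by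
      intro q hq
      by_contra hqO
      exact hq (hKresp _ _ (hedge q hqO))
    set ζ : G.E → ℝ := fun q =>
      if (G.ends q).1 ∈ Kst ∧ (G.ends q).2 ∈ Kst then ωs q else 0 with hζdef
    have hζin : ∀ x q, x ∈ Kst → G.Inc x q → ζ q = ωs q := by
      intro x q hx hinc
      by_cases hqO : q ∈ O
      · simp only [hζdef]
        rw [hωsO q hqO]
        split_ifs <;> rfl
      · have hiff := hKresp _ _ (hedge q hqO)
        rcases hinc with h | h
        · have h1 : (G.ends q).1 ∈ Kst := by rw [h]; exact hx
          simp only [hζdef]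
          rw [if_pos ⟨h1, hiff.1 h1⟩]
        · have h2 : (G.ends q).2 ∈ Kst := by rw [h]; exact hx
          simp only [hζdef]
          rw [if_pos ⟨hiff.2 h2, h2⟩]
    have hζout : ∀ x q, x ∉ Kst → G.Inc x q → ζ q = 0 := by
      intro x q hx hinc
      simp only [hζdef]
      rw [if_neg]
      rintro ⟨h1, h2⟩
      rcases hinc with h | h
      · exact hx (h ▸ h1)
      · exact hx (h ▸ h2)
    have hζflow : IsFlow G ζ := by
      intro x
      by_cases hx : x ∈ Kst
      · have hsum : ∑ q, ((if (G.ends q).2 = x then ζ q else 0)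
            - (if (G.ends q).1 = x then ζ q else 0))
            = ∑ q, ((if (G.ends q).2 = x then ωs q else 0)
            - (if (G.ends q).1 = x then ωs q else 0)) := by
          refine Finset.sum_congr rfl fun q _ => ?_
          rcases eq_or_ne (G.ends q).2 x with h2 | h2 <;>
            rcases eq_or_ne (G.ends q).1 x with h1 | h1
          · simp only [if_pos h2, if_pos h1, hζin x q hx (Or.inl h1)]
          · simp only [if_pos h2, if_neg h1, hζin x q hx (Or.inr h2)]
          · simp only [if_neg h2, if_pos h1, hζin x q hx (Or.inl h1)]
          · simp only [if_neg h2, if_neg h1]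
        rw [hsum]
        exact hωsf x
      · refine Finset.sum_eq_zero fun q _ => ?_
        rcases eq_or_ne (G.ends q).2 x with h2 | h2 <;>
          rcases eq_or_ne (G.ends q).1 x with h1 | h1
        · simp only [if_pos h2, if_pos h1, hζout x q hx (Or.inl h1), sub_zero]
        · simp only [if_pos h2, if_neg h1, hζout x q hx (Or.inr h2), sub_zero]
        · simp only [if_neg h2, if_pos h1, hζout x q hx (Or.inl h1), zero_sub, neg_zero]
        · simp only [if_neg h2, if_neg h1, sub_zero]
    have hζe : ζ est = ωs est := by
      simp only [hζdef]
      rw [if_pos ⟨hxK, (hKmem _).2 (hedge est hestO)⟩]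
    have hζσe : ζ (γ.emap est) ≠ 0 := by
      intro h0
      have h1 := H' ζ hζflow est
      rw [h0, mul_zero, hζe] at h1
      exact hest h1
    have hgx : γ.vmap (G.ends est).1 ∈ Kst := by
      have hcond : (G.ends (γ.emap est)).1 ∈ Kst ∧ (G.ends (γ.emap est)).2 ∈ Kst := by
        by_contra hc
        apply hζσe
        simp only [hζdef]
        rw [if_neg hc]
      rcases γ.compat est with hc | hc <;> rw [hc] at hcond
      · exact hcond.1
      · exact hcond.2
    have hgstep : ∀ a b, Reach a b → Reach (γ.vmap a) (γ.vmap b) := by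
      intro a b hab
      refine Relation.ReflTransGen.lift γ.vmap ?_ a b hab
      rintro u v ⟨q, hqO, hor⟩
      refine ⟨γ.emap q, fun h => hqO (hOpre q h), ?_⟩
      rcases γ.compat q with hc | hc <;> rcases hor with he | he <;> rw [he] at hc
      · exact Or.inl hc
      · exact Or.inr hc
      · exact Or.inr hc
      · exact Or.inl hc
    have hgK : ∀ y, y ∈ Kst → γ.vmap y ∈ Kst := by
      intro y hy
      have h1 := hgstep _ _ ((hKmem y).1 hy)
      exact (hKmem _).2 (((hKmem _).1 hgx).trans h1)
    have hgKiff : ∀ y, y ∈ Kst ↔ γ.vmap y ∈ Kst := by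
      have him : Kst.image γ.vmap = Kst := by
        apply Finset.eq_of_subset_of_card_le
        · intro y hy
          obtain ⟨z, hz, rfl⟩ := Finset.mem_image.1 hy
          exact hgK z hz
        · rw [Finset.card_image_of_injective _ γ.vmap.injective]
      intro y
      refine ⟨hgK y, fun hy => ?_⟩
      rw [← him] at hy
      obtain ⟨z, hz, hzy⟩ := Finset.mem_image.1 hy
      rwa [← γ.vmap.injective hzy]
    have hpair : ∀ p q, p ∈ O → q ∈ O → ∃ t : ℝ, ∀ ω, IsFlow G ω → ω p = t * ω q := by
      intro p q hpO hqO
      obtain ⟨tp, htp, hsp⟩ := hseries p hpO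
      obtain ⟨tq, htq, hsq⟩ := hseries q hqO
      refine ⟨tp * tq, fun ω hω => ?_⟩
      have h1 := hsp ω hω
      have h2 := hsq ω hω
      rcases htq with rfl | rfl <;> rw [h1, h2] <;> ring
    obtain ⟨tS, hserS⟩ := hpair e₀ (γ.emap e₀) hO₀ (hOσ _ hO₀)
    obtain ⟨S, hSnc, hSp, hSq⟩ := exists_cut h2ec (Ne.symm he₀) tS hserS
    have hSresp := hresp S (fun q hq => hSnc q
      (by rintro rfl; exact hq hO₀) (by rintro rfl; exact hq (hOσ _ hO₀)))
    have hKne : ∃ y, y ∉ Kst := by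
      by_contra hall
      push_neg at hall
      apply hSp
      have h1 := hSresp _ _ ((hKmem _).1 (hall (G.ends e₀).1))
      have h2 := hSresp _ _ ((hKmem _).1 (hall (G.ends e₀).2))
      exact h1.symm.trans h2
    obtain ⟨y₀, hy₀⟩ := hKne
    have hC1 : ∃ p, Crosses G Kst p := by
      by_contra hc
      push_neg at hc
      rcases G.conn Kst (fun q => not_not.1 (hc q)) with h | h
      · rw [h] at hxK; exact absurd hxK (Finset.notMem_empty _)
      · rw [h] at hy₀; exact hy₀ (Finset.mem_univ _)
    obtain ⟨p, hp⟩ := hC1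
    have hC2 : ∃ q, q ≠ p ∧ Crosses G Kst q := by
      by_contra hc
      push_neg at hc
      rcases h2ec p Kst (fun q hq => not_not.1 (hc q hq)) with h | h
      · rw [h] at hxK; exact absurd hxK (Finset.notMem_empty _)
      · rw [h] at hy₀; exact hy₀ (Finset.mem_univ _)
    obtain ⟨q, hqp, hq⟩ := hC2
    have hpO := hKcross p hp
    have hqO := hKcross q hq
    have honly : ∀ r, Crosses G Kst r → r = p ∨ r = q := by
      intro r hr
      by_contra hc
      push_neg at hc
      obtain ⟨hrp, hrq⟩ := hc
      have hrO := hKcross r hr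
      obtain ⟨t1, hser1⟩ := hpair p q hpO hqO
      obtain ⟨T, hTnc, hTp, hTq⟩ := exists_cut h2ec (Ne.symm hqp) t1 hser1
      obtain ⟨t2, hser2⟩ := hpair q r hqO hrO
      obtain ⟨U, hUnc, hUq, hUr⟩ := exists_cut h2ec (Ne.symm hrq) t2 hser2
      have hTresp := hresp T (fun s hs => hTnc s
        (by rintro rfl; exact hs hpO) (by rintro rfl; exact hs hqO))
      have hUresp := hresp U (fun s hs => hUnc s
        (by rintro rfl; exact hs hqO) (by rintro rfl; exact hs hrO))
      set X : Finset G.V := Finset.univ.filter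
        (fun v => ¬(v ∈ T ↔ (G.ends est).1 ∈ T) ∧ (v ∈ U ↔ (G.ends est).1 ∈ U)) with hXdef
      have hXmem : ∀ v, v ∈ X ↔ (¬(v ∈ T ↔ (G.ends est).1 ∈ T)
          ∧ (v ∈ U ↔ (G.ends est).1 ∈ U)) := by
        intro v; simp [hXdef]
      have hKT : ∀ v, v ∈ Kst → (v ∈ T ↔ (G.ends est).1 ∈ T) :=
        fun v hv => (hTresp _ _ ((hKmem v).1 hv)).symm
      have hKU : ∀ v, v ∈ Kst → (v ∈ U ↔ (G.ends est).1 ∈ U) :=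
        fun v hv => (hUresp _ _ ((hKmem v).1 hv)).symm
      have hXall : ∀ s, s ≠ p → ((G.ends s).1 ∈ X ↔ (G.ends s).2 ∈ X) := by
        intro s hs
        rw [hXmem, hXmem]
        have hk1 := hKT (G.ends s).1
        have hk2 := hKT (G.ends s).2
        have hk3 := hKU (G.ends s).1
        have hk4 := hKU (G.ends s).2
        rcases eq_or_ne s q with rfl | hsq
        · exact prop_case_q _ _ _ _ _ _ _ _ hq hTq hUq hk1 hk2 hk3 hk4
        rcases eq_or_ne s r with rfl | hsr
        · exact prop_case_r _ _ _ _ _ _ _ _ hr (hTnc s hs hsq) hUr hk1 hk2 hk3 hk4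
        · exact prop_case_gen _ _ _ _ _ _ (hTnc s hs hsq) (hUnc s hsq hsr)
      have hpX : ¬((G.ends p).1 ∈ X ↔ (G.ends p).2 ∈ X) := by
        rw [hXmem, hXmem]
        exact prop_case_p _ _ _ _ _ _ _ _ hp hTp (hUnc p (Ne.symm hqp) (Ne.symm hrp))
          (hKT (G.ends p).1) (hKT (G.ends p).2) (hKU (G.ends p).1) (hKU (G.ends p).2)
      rcases h2ec p X hXall with h | h
      · apply hpX; rw [h]; simp
      · apply hpX; rw [h]; simp
    have hσcross : ∀ s, Crosses G Kst s → Crosses G Kst (γ.emap s) := by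
      intro s hs hiff
      apply hs
      rcases γ.compat s with hc | hc <;> rw [hc] at hiff
      · exact (hgKiff _).trans (hiff.trans (hgKiff _).symm)
      · exact (hgKiff _).trans (hiff.symm.trans (hgKiff _).symm)
    have hσp : γ.emap p = q := by
      rcases honly _ (hσcross p hp) with h | h
      · exact absurd h (hOnofix p hpO)
      · exact h
    have hcons := cut_conservation Kst ω₀ hω₀f
    have hsupp : ∀ s ∈ Finset.univ, s ∉ ({p, q} : Finset G.E) →
        ω₀ s * ((if (G.ends s).2 ∈ Kst then (1:ℝ) else 0)
          - (if (G.ends s).1 ∈ Kst then 1 else 0)) = 0 := by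
      intro s _ hs
      simp only [Finset.mem_insert, Finset.mem_singleton] at hs
      push_neg at hs
      have hnc : ((G.ends s).1 ∈ Kst ↔ (G.ends s).2 ∈ Kst) := by
        by_contra hcr
        rcases honly s hcr with h | h
        · exact hs.1 h
        · exact hs.2 h
      by_cases h1 : (G.ends s).1 ∈ Kst
      · rw [if_pos (hnc.1 h1), if_pos h1]; ring
      · rw [if_neg (fun h => h1 (hnc.2 h)), if_neg h1]; ring
    rw [← Finset.sum_subset (Finset.subset_univ {p, q}) hsupp] at hcons
    rw [Finset.sum_pair (Ne.symm hqp)] at hcons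
    have hHp := H' ω₀ hω₀f p
    rw [hσp] at hHp
    have hωq := hω₀O q hqO
    have hιrel : ((if (G.ends q).2 ∈ Kst then (1:ℝ) else 0)
          - (if (G.ends q).1 ∈ Kst then 1 else 0))
        = asgn γ p * ((if (G.ends p).2 ∈ Kst then (1:ℝ) else 0)
          - (if (G.ends p).1 ∈ Kst then 1 else 0)) := by
      rcases asgn_cases γ p with ⟨ha, hc⟩ | ⟨ha, hc⟩ <;> rw [hσp] at hc
      · have hq1 : (G.ends q).1 = γ.vmap (G.ends p).1 := by rw [hc]
        have hq2 : (G.ends q).2 = γ.vmap (G.ends p).2 := by rw [hc]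
        rw [ha, hq1, hq2, one_mul]
        by_cases h1 : (G.ends p).1 ∈ Kst <;> by_cases h2 : (G.ends p).2 ∈ Kst
        · rw [if_pos ((hgKiff _).1 h2), if_pos ((hgKiff _).1 h1), if_pos h2, if_pos h1]
        · rw [if_neg (fun hh => h2 ((hgKiff _).2 hh)), if_pos ((hgKiff _).1 h1),
            if_neg h2, if_pos h1]
        · rw [if_pos ((hgKiff _).1 h2), if_neg (fun hh => h1 ((hgKiff _).2 hh)),
            if_pos h2, if_neg h1]
        · rw [if_neg (fun hh => h2 ((hgKiff _).2 hh)),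
            if_neg (fun hh => h1 ((hgKiff _).2 hh)), if_neg h2, if_neg h1]
      · have hq1 : (G.ends q).1 = γ.vmap (G.ends p).2 := by rw [hc]
        have hq2 : (G.ends q).2 = γ.vmap (G.ends p).1 := by rw [hc]
        rw [ha, hq1, hq2]
        by_cases h1 : (G.ends p).1 ∈ Kst <;> by_cases h2 : (G.ends p).2 ∈ Kst
        · rw [if_pos ((hgKiff _).1 h1), if_pos ((hgKiff _).1 h2), if_pos h2, if_pos h1]
          ring
        · rw [if_pos ((hgKiff _).1 h1), if_neg (fun hh => h2 ((hgKiff _).2 hh)),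
            if_neg h2, if_pos h1]
          ring
        · rw [if_neg (fun hh => h1 ((hgKiff _).2 hh)), if_pos ((hgKiff _).1 h2),
            if_pos h2, if_neg h1]
          ring
        · rw [if_neg (fun hh => h1 ((hgKiff _).2 hh)),
            if_neg (fun hh => h2 ((hgKiff _).2 hh)), if_neg h2, if_neg h1]
          ring
    rw [hHp, hιrel] at hcons
    have hι : ((if (G.ends p).2 ∈ Kst then (1:ℝ) else 0)
        - (if (G.ends p).1 ∈ Kst then 1 else 0)) ≠ 0 := by
      by_cases h1 : (G.ends p).1 ∈ Kst <;> by_cases h2 : (G.ends p).2 ∈ Kst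
      · exact absurd (iff_of_true h1 h2) hp
      · rw [if_neg h2, if_pos h1]; norm_num
      · rw [if_pos h2, if_neg h1]; norm_num
      · exact absurd (iff_of_false h1 h2) hp
    have h0 : asgn γ p * (ω₀ q * ((if (G.ends p).2 ∈ Kst then (1:ℝ) else 0)
        - (if (G.ends p).1 ∈ Kst then 1 else 0))) = 0 := by
      linear_combination hcons / 2
    exact absurd h0 (mul_ne_zero (asgn_ne γ p) (mul_ne_zero hωq hι))
  have hsgn : ∀ e, G.ends e = (γ.vmap (G.ends e).1, γ.vmap (G.ends e).2) := by
    intro e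
    rcases asgn_cases γ e with ⟨ha, hc⟩ | ⟨ha, hc⟩
    · rw [hfix e] at hc; exact hc
    · exfalso
      obtain ⟨ω, hω, hne⟩ := exists_flow_ne h2ec e
      have h1 := H' ω hω e
      rw [hfix e, ha] at h1
      have h2 : ω e = 0 := by linarith
      exact hne h2
  refine ⟨hfix, fun x => ?_⟩
  obtain ⟨e, hinc⟩ := exists_inc hg x
  rcases hinc with h | h
  · have h1 := congrArg Prod.fst (hsgn e)
    rw [h] at h1
    exact h1.symm
  · have h1 := congrArg Prod.snd (hsgn e)
    rw [h] at h1
    exact h1.symm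

lemma isFlow_pull (γ : GraphAut G) (ω : G.E → ℝ) (hω : IsFlow G ω) :
    IsFlow G (autPullForm γ ω) := by
  intro x
  have key : ∀ e, ((if (G.ends e).2 = x then autPullForm γ ω e else 0)
      - (if (G.ends e).1 = x then autPullForm γ ω e else 0))
      = ((if (G.ends (γ.emap e)).2 = γ.vmap x then ω (γ.emap e) else 0)
      - (if (G.ends (γ.emap e)).1 = γ.vmap x then ω (γ.emap e) else 0)) := by
    intro e
    rw [autPullForm_eq]
    rcases asgn_cases γ e with ⟨ha, hc⟩ | ⟨ha, hc⟩
    · have h1 : (G.ends (γ.emap e)).1 = γ.vmap (G.ends e).1 := by rw [hc]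
      have h2 : (G.ends (γ.emap e)).2 = γ.vmap (G.ends e).2 := by rw [hc]
      rw [ha, one_mul, h1, h2]
      rcases eq_or_ne (G.ends e).2 x with hx2 | hx2 <;>
        rcases eq_or_ne (G.ends e).1 x with hx1 | hx1
      · rw [if_pos hx2, if_pos hx1, if_pos (by rw [hx2]), if_pos (by rw [hx1])]
      · rw [if_pos hx2, if_neg hx1, if_pos (by rw [hx2]),
          if_neg (fun h => hx1 (γ.vmap.injective h))]
      · rw [if_neg hx2, if_pos hx1, if_neg (fun h => hx2 (γ.vmap.injective h)),
          if_pos (by rw [hx1])]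
      · rw [if_neg hx2, if_neg hx1, if_neg (fun h => hx2 (γ.vmap.injective h)),
          if_neg (fun h => hx1 (γ.vmap.injective h))]
    · have h1 : (G.ends (γ.emap e)).1 = γ.vmap (G.ends e).2 := by rw [hc]
      have h2 : (G.ends (γ.emap e)).2 = γ.vmap (G.ends e).1 := by rw [hc]
      rw [ha, h1, h2]
      rcases eq_or_ne (G.ends e).2 x with hx2 | hx2 <;>
        rcases eq_or_ne (G.ends e).1 x with hx1 | hx1
      · rw [if_pos hx2, if_pos hx1, if_pos (by rw [hx1]), if_pos (by rw [hx2])]; ring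
      · rw [if_pos hx2, if_neg hx1, if_neg (fun h => hx1 (γ.vmap.injective h)),
          if_pos (by rw [hx2])]; ring
      · rw [if_neg hx2, if_pos hx1, if_pos (by rw [hx1]),
          if_neg (fun h => hx2 (γ.vmap.injective h))]; ring
      · rw [if_neg hx2, if_neg hx1, if_neg (fun h => hx1 (γ.vmap.injective h)),
          if_neg (fun h => hx2 (γ.vmap.injective h))]
  have hsum : ∑ e, ((if (G.ends e).2 = x then autPullForm γ ω e else 0)
      - (if (G.ends e).1 = x then autPullForm γ ω e else 0))
      = ∑ e, ((if (G.ends (γ.emap e)).2 = γ.vmap x then ω (γ.emap e) else 0)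
      - (if (G.ends (γ.emap e)).1 = γ.vmap x then ω (γ.emap e) else 0)) :=
    Finset.sum_congr rfl fun e _ => key e
  rw [hsum, Equiv.sum_comp γ.emap (fun e' => ((if (G.ends e').2 = γ.vmap x then ω e' else 0)
      - (if (G.ends e').1 = γ.vmap x then ω e' else 0)))]
  exact hω (γ.vmap x)

end Aux17

/-- Composition of graph automorphisms (apply `ε` first, then `δ`). -/
def GraphAut.comp {G : Multigraph} (δ ε : GraphAut G) : GraphAut G where
  vmap := ε.vmap.trans δ.vmap
  emap := ε.emap.trans δ.emap
  compat := by
    intro e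
    simp only [Equiv.trans_apply]
    rcases δ.compat (ε.emap e) with h1 | h1 <;> rcases ε.compat e with h2 | h2 <;>
      rw [h2] at h1
    · exact Or.inl h1
    · exact Or.inr h1
    · exact Or.inr h1
    · exact Or.inl h1

/-- Inverse of a graph automorphism. -/
def GraphAut.inv {G : Multigraph} (δ : GraphAut G) : GraphAut G where
  vmap := δ.vmap.symm
  emap := δ.emap.symm
  compat := by
    intro e
    rcases δ.compat (δ.emap.symm e) with h1 | h1 <;> rw [Equiv.apply_symm_apply] at h1
    · left
      rw [h1]
      simp
    · right
      rw [h1]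
      simp

namespace Aux17

lemma graphAut_ext {γ₁ γ₂ : GraphAut G} (h1 : γ₁.vmap = γ₂.vmap)
    (h2 : γ₁.emap = γ₂.emap) : γ₁ = γ₂ := by
  cases γ₁; cases γ₂
  simp only at h1 h2
  cases h1; cases h2
  rfl

lemma asgn_comp (δ ε : GraphAut G) (e : G.E) :
    asgn (GraphAut.comp δ ε) e = asgn δ (ε.emap e) * asgn ε e := by
  have hne : δ.vmap (ε.vmap (G.ends e).1) ≠ δ.vmap (ε.vmap (G.ends e).2) :=
    fun h => G.loopless e (ε.vmap.injective (δ.vmap.injective h))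
  have hemap : (GraphAut.comp δ ε).emap e = δ.emap (ε.emap e) := rfl
  have hvmap1 : (GraphAut.comp δ ε).vmap (G.ends e).1 = δ.vmap (ε.vmap (G.ends e).1) := rfl
  have hvmap2 : (GraphAut.comp δ ε).vmap (G.ends e).2 = δ.vmap (ε.vmap (G.ends e).2) := rfl
  rcases asgn_cases ε e with ⟨ha2, hc2⟩ | ⟨ha2, hc2⟩ <;>
    rcases asgn_cases δ (ε.emap e) with ⟨ha1, hc1⟩ | ⟨ha1, hc1⟩ <;>
    rw [hc2] at hc1 <;> rw [ha1, ha2] <;> simp only [asgn] <;>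
    rw [hemap, hvmap1, hvmap2]
  · have hc1' : G.ends (δ.emap (ε.emap e))
        = (δ.vmap (ε.vmap (G.ends e).1), δ.vmap (ε.vmap (G.ends e).2)) := hc1
    rw [if_pos hc1']; norm_num
  · have hc1' : G.ends (δ.emap (ε.emap e))
        = (δ.vmap (ε.vmap (G.ends e).2), δ.vmap (ε.vmap (G.ends e).1)) := hc1
    rw [if_neg (fun hC => hne (congrArg Prod.fst (hC.symm.trans hc1')))]; norm_num
  · have hc1' : G.ends (δ.emap (ε.emap e))
        = (δ.vmap (ε.vmap (G.ends e).2), δ.vmap (ε.vmap (G.ends e).1)) := hc1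
    rw [if_neg (fun hC => hne (congrArg Prod.fst (hC.symm.trans hc1')))]; norm_num
  · have hc1' : G.ends (δ.emap (ε.emap e))
        = (δ.vmap (ε.vmap (G.ends e).1), δ.vmap (ε.vmap (G.ends e).2)) := hc1
    rw [if_pos hc1']; norm_num

lemma autPullForm_comp (δ ε : GraphAut G) (ω : G.E → ℝ) :
    autPullForm (GraphAut.comp δ ε) ω = autPullForm ε (autPullForm δ ω) := by
  funext e
  rw [autPullForm_eq, autPullForm_eq, autPullForm_eq, asgn_comp]
  have hemap : (GraphAut.comp δ ε).emap e = δ.emap (ε.emap e) := rfl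
  rw [hemap]; ring

lemma autPullForm_of_pointwise_id (γ : GraphAut G) (he : ∀ e, γ.emap e = e)
    (hv : ∀ x, γ.vmap x = x) (ω : G.E → ℝ) : autPullForm γ ω = ω := by
  funext e
  rw [autPullForm_eq, he e]
  have hs : asgn γ e = 1 := by
    simp only [asgn, he e, hv]
    simp
  rw [hs, one_mul]

end Aux17

/-- for a 2-edge-connected graph of genus at least 2, the action of
`Aut(G)` on the flow space `H¹(G,ℝ)` is faithful. -/
theorem stmt17 (G : Multigraph) (h2ec : TwoEdgeConnected G) (hg : 2 ≤ genus G) :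
    ∀ α β : GraphAut G,
      (∀ ω : G.E → ℝ, IsFlow G ω → autPullForm α ω = autPullForm β ω) → α = β := by
  intro α β hαβ
  have hγ : ∀ ω : G.E → ℝ, IsFlow G ω →
      autPullForm (GraphAut.comp (GraphAut.inv β) α) ω = ω := by
    intro ω hω
    have hω' : IsFlow G (autPullForm (GraphAut.inv β) ω) := Aux17.isFlow_pull _ ω hω
    calc autPullForm (GraphAut.comp (GraphAut.inv β) α) ω
        = autPullForm α (autPullForm (GraphAut.inv β) ω) := Aux17.autPullForm_comp _ _ ω
      _ = autPullForm β (autPullForm (GraphAut.inv β) ω) := hαβ _ hω'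
      _ = autPullForm (GraphAut.comp (GraphAut.inv β) β) ω := (Aux17.autPullForm_comp _ _ ω).symm
      _ = ω := Aux17.autPullForm_of_pointwise_id _
          (fun e => Equiv.symm_apply_apply β.emap e)
          (fun x => Equiv.symm_apply_apply β.vmap x) ω
  obtain ⟨he, hv⟩ := Aux17.aut_trivial h2ec hg _ hγ
  refine Aux17.graphAut_ext ?_ ?_
  · ext x
    have h1 : β.vmap.symm (α.vmap x) = x := hv x
    exact (Equiv.symm_apply_eq β.vmap).1 h1
  · ext e
    have h1 : β.emap.symm (α.emap e) = e := he e
    exact (Equiv.symm_apply_eq β.emap).1 h1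
end

section
/- Let G be a 2-edge-connected graph. The canonical map ψ_G : E(G) → P(H¹(G,ℝ)), sending an edge e to the hyperplane W(e) = {ω ∈ H¹(G) : ω(e) = 0}, is injective if and only if G is 3-edge-connected. -/
open scoped Classical
open Finset

variable {G G' : Multigraph}

section Stmt19Aux

open scoped RealInnerProductSpace

variable (G : Multigraph)

/-- The "coboundary of a vertex" vector: `+1` on incoming, `-1` on outgoing edges. -/
noncomputable def dvec (x : G.V) : EuclideanSpace ℝ G.E :=
  WithLp.toLp 2 (fun e => (if (G.ends e).2 = x then (1 : ℝ) else 0) - (if (G.ends e).1 = x then (1 : ℝ) else 0))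

/-- The cut space. -/
noncomputable def cutSpace : Submodule ℝ (EuclideanSpace ℝ G.E) :=
  Submodule.span ℝ (Set.range (dvec G))

lemma inner_dvec (x : G.V) (ω : EuclideanSpace ℝ G.E) :
    ⟪dvec G x, ω⟫ = ∑ e, ((if (G.ends e).2 = x then ω e else 0) -
      (if (G.ends e).1 = x then ω e else 0)) := by
  rw [PiLp.inner_apply]
  refine Finset.sum_congr rfl fun e _ => ?_
  simp only [RCLike.inner_apply, conj_trivial, dvec]
  by_cases h1 : (G.ends e).2 = x <;> by_cases h2 : (G.ends e).1 = x <;>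
    simp [h1, h2, sub_mul]

lemma isFlow_iff_mem (ω : EuclideanSpace ℝ G.E) :
    IsFlow G ω ↔ ω ∈ (cutSpace G)ᗮ := by
  rw [Submodule.mem_orthogonal]
  constructor
  · intro h u hu
    induction hu using Submodule.span_induction with
    | mem u hu => obtain ⟨x, rfl⟩ := hu; rw [inner_dvec]; exact h x
    | zero => simp
    | add u v _ _ hu hv => rw [inner_add_left, hu, hv, add_zero]
    | smul a u _ hu => rw [inner_smul_left, hu, mul_zero]
  · intro h x
    rw [← inner_dvec]
    exact h _ (Submodule.subset_span ⟨x, rfl⟩)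

lemma eval_cutSpace {h : EuclideanSpace ℝ G.E} (hh : h ∈ cutSpace G) :
    ∃ c : G.V → ℝ, ∀ e, h e = c (G.ends e).2 - c (G.ends e).1 := by
  rw [cutSpace, Submodule.mem_span_range_iff_exists_fun] at hh
  obtain ⟨c, hc⟩ := hh
  refine ⟨c, fun e => ?_⟩
  rw [← hc]
  have h1 : (∑ x, c x • dvec G x) e = ∑ x, c x * dvec G x e := by
    rw [WithLp.ofLp_sum, Finset.sum_apply]; rfl
  rw [h1]
  have h2 : ∀ x, c x * dvec G x e =
      (if (G.ends e).2 = x then c x else 0) - (if (G.ends e).1 = x then c x else 0) := by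
    intro x
    by_cases h1 : (G.ends e).2 = x <;> by_cases h2 : (G.ends e).1 = x <;>
      simp [dvec, h1, h2, mul_sub]
  simp only [h2, Finset.sum_sub_distrib, Finset.sum_ite_eq, Finset.mem_univ, if_true]

end Stmt19Aux

/-- for a 2-edge-connected graph, the canonical map
`e ↦ W(e) = {ω ∈ H¹(G,ℝ) : ω(e) = 0}` is injective iff `G` is 3-edge-connected. -/
theorem stmt19 (G : Multigraph) (h2ec : TwoEdgeConnected G) :
    (∀ e₁ e₂ : G.E,
      {ω : G.E → ℝ | IsFlow G ω ∧ ω e₁ = 0} = {ω : G.E → ℝ | IsFlow G ω ∧ ω e₂ = 0} →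
      e₁ = e₂) ↔ ThreeEdgeConnected G := by
  constructor
  · -- injectivity → 3-edge-connected
    intro hinj e₁ e₂ S hS
    by_contra hcon
    push_neg at hcon
    obtain ⟨hS0, hSu⟩ := hcon
    have hne : e₁ ≠ e₂ := by
      rintro rfl
      rcases h2ec e₁ S (fun e he => hS e he he) with h | h
      · exact hS0.ne_empty h
      · exact hSu h
    have hc₁ : ¬(((G.ends e₁).1 ∈ S) ↔ ((G.ends e₁).2 ∈ S)) := by
      intro hc
      rcases h2ec e₂ S (fun e he => by
        by_cases h' : e = e₁
        · subst h'; exact hc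
        · exact hS e h' he) with h | h
      · exact hS0.ne_empty h
      · exact hSu h
    have hc₂ : ¬(((G.ends e₂).1 ∈ S) ↔ ((G.ends e₂).2 ∈ S)) := by
      intro hc
      rcases h2ec e₁ S (fun e he => by
        by_cases h' : e = e₂
        · subst h'; exact hc
        · exact hS e he h') with h | h
      · exact hS0.ne_empty h
      · exact hSu h
    set σ : G.E → ℝ := fun e =>
      (if (G.ends e).2 ∈ S then (1 : ℝ) else 0) - (if (G.ends e).1 ∈ S then (1 : ℝ) else 0)
      with hσ
    have hσ₁ : σ e₁ ≠ 0 := by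
      by_cases h1 : (G.ends e₁).1 ∈ S <;> by_cases h2 : (G.ends e₁).2 ∈ S
      · exact absurd (iff_of_true h1 h2) hc₁
      · simp [hσ, h1, h2]
      · simp [hσ, h1, h2]
      · exact absurd (iff_of_false h1 h2) hc₁
    have hσ₂ : σ e₂ ≠ 0 := by
      by_cases h1 : (G.ends e₂).1 ∈ S <;> by_cases h2 : (G.ends e₂).2 ∈ S
      · exact absurd (iff_of_true h1 h2) hc₂
      · simp [hσ, h1, h2]
      · simp [hσ, h1, h2]
      · exact absurd (iff_of_false h1 h2) hc₂
    have key : ∀ ω : G.E → ℝ, IsFlow G ω → σ e₁ * ω e₁ + σ e₂ * ω e₂ = 0 := by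
      intro ω hω
      have h0 : ∑ x ∈ S, (∑ e, ((if (G.ends e).2 = x then ω e else 0) -
          (if (G.ends e).1 = x then ω e else 0))) = 0 :=
        Finset.sum_eq_zero (fun x _ => hω x)
      rw [Finset.sum_comm] at h0
      have h1 : ∀ e, ∑ x ∈ S, ((if (G.ends e).2 = x then ω e else 0) -
          (if (G.ends e).1 = x then ω e else 0)) = σ e * ω e := by
        intro e
        rw [Finset.sum_sub_distrib, Finset.sum_ite_eq S, Finset.sum_ite_eq S, hσ]
        simp only [sub_mul, one_mul, zero_mul]
        by_cases h1 : (G.ends e).2 ∈ S <;> by_cases h2 : (G.ends e).1 ∈ S <;>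
          simp [h1, h2]
      rw [Finset.sum_congr rfl (fun e _ => h1 e)] at h0
      have h2 : ∑ e, σ e * ω e = σ e₁ * ω e₁ + σ e₂ * ω e₂ := by
        have hsub : ∑ e ∈ ({e₁, e₂} : Finset G.E), σ e * ω e = ∑ e, σ e * ω e := by
          refine Finset.sum_subset (Finset.subset_univ _) ?_
          intro e _ he
          simp only [Finset.mem_insert, Finset.mem_singleton, not_or] at he
          have hiff := hS e he.1 he.2
          have hz : σ e = 0 := by
            by_cases h3 : (G.ends e).1 ∈ S
            · simp [hσ, h3, hiff.mp h3]
            · have h4 : (G.ends e).2 ∉ S := fun h => h3 (hiff.mpr h)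
              simp [hσ, h3, h4]
          simp [hz]
        rw [← hsub, Finset.sum_pair hne]
      rw [h2] at h0; exact h0
    refine hne (hinj e₁ e₂ ?_)
    ext ω
    simp only [Set.mem_setOf_eq]
    constructor
    · rintro ⟨hf, h0⟩
      refine ⟨hf, ?_⟩
      have hk := key ω hf
      rw [h0, mul_zero, zero_add] at hk
      exact (mul_eq_zero.mp hk).resolve_left hσ₂
    · rintro ⟨hf, h0⟩
      refine ⟨hf, ?_⟩
      have hk := key ω hf
      rw [h0, mul_zero, add_zero] at hk
      exact (mul_eq_zero.mp hk).resolve_left hσ₁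
  · -- 3-edge-connected → injectivity
    intro h3ec e₁ e₂ hWeq
    by_contra hne
    have hiff : ∀ ω : G.E → ℝ, IsFlow G ω → (ω e₁ = 0 ↔ ω e₂ = 0) := by
      intro ω hω
      constructor
      · intro h; exact ((Set.ext_iff.mp hWeq ω).mp ⟨hω, h⟩).2
      · intro h; exact ((Set.ext_iff.mp hWeq ω).mpr ⟨hω, h⟩).2
    have hlam : ∃ l : ℝ, ∀ ω ∈ (cutSpace G)ᗮ, ω e₂ = l * ω e₁ := by
      by_cases hex : ∃ ω ∈ (cutSpace G)ᗮ, ω e₁ ≠ 0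
      · obtain ⟨ω₀, hω₀, h0⟩ := hex
        refine ⟨ω₀ e₂ / ω₀ e₁, fun ω hω => ?_⟩
        have hmem : ω₀ e₁ • ω - ω e₁ • ω₀ ∈ (cutSpace G)ᗮ :=
          Submodule.sub_mem _ (Submodule.smul_mem _ _ hω) (Submodule.smul_mem _ _ hω₀)
        have happ1 : (ω₀ e₁ • ω - ω e₁ • ω₀) e₁ = 0 := by
          show ω₀ e₁ * ω e₁ - ω e₁ * ω₀ e₁ = 0
          ring
        have happ2 : ω₀ e₁ * ω e₂ - ω e₁ * ω₀ e₂ = 0 :=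
          (hiff _ ((isFlow_iff_mem G _).mpr hmem)).mp happ1
        field_simp
        linear_combination happ2
      · push_neg at hex
        refine ⟨0, fun ω hω => ?_⟩
        rw [zero_mul]
        exact (hiff ω ((isFlow_iff_mem G ω).mpr hω)).mp (hex ω hω)
    obtain ⟨l, hl⟩ := hlam
    set v : EuclideanSpace ℝ G.E :=
      EuclideanSpace.single e₂ (1 : ℝ) - l • EuclideanSpace.single e₁ 1 with hvdef
    have hmem : v ∈ ((cutSpace G)ᗮ)ᗮ := by
      rw [Submodule.mem_orthogonal]
      intro u hu
      rw [hvdef, inner_sub_right, inner_smul_right, EuclideanSpace.inner_single_right,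
        EuclideanSpace.inner_single_right]
      simp only [RCLike.inner_apply, conj_trivial, one_mul, mul_one]
      rw [hl u hu]
      ring
    rw [Submodule.orthogonal_orthogonal] at hmem
    obtain ⟨c, hc⟩ := eval_cutSpace G hmem
    have hv₂ : v e₂ = 1 := by
      have : v e₂ = EuclideanSpace.single e₂ (1 : ℝ) e₂ -
          l * EuclideanSpace.single e₁ (1 : ℝ) e₂ := rfl
      rw [this, EuclideanSpace.single_apply, EuclideanSpace.single_apply]
      simp [Ne.symm hne]
    have hstep : ∀ e, e ≠ e₁ → e ≠ e₂ → c (G.ends e).1 = c (G.ends e).2 := by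
      intro e h1 h2
      have hv : v e = 0 := by
        have : v e = EuclideanSpace.single e₂ (1 : ℝ) e -
            l * EuclideanSpace.single e₁ (1 : ℝ) e := rfl
        rw [this, EuclideanSpace.single_apply, EuclideanSpace.single_apply]
        simp [h1, h2]
      have := hc e
      rw [hv] at this
      linarith
    set S := Finset.univ.filter (fun y => c y = c (G.ends e₂).2) with hSdef
    have hmemS : ∀ y, y ∈ S ↔ c y = c (G.ends e₂).2 := by
      intro y; simp [hSdef]
    rcases h3ec e₁ e₂ S (fun e hh1 hh2 => by
        rw [hmemS, hmemS, hstep e hh1 hh2]) with hcase | hcase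
    · have : (G.ends e₂).2 ∈ S := (hmemS _).mpr rfl
      rw [hcase] at this
      simp at this
    · have h1' : (G.ends e₂).1 ∈ S := hcase ▸ Finset.mem_univ _
      rw [hmemS] at h1'
      have := hc e₂
      rw [hv₂] at this
      linarith
end
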